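/- arXiv:2603.22156 — 5 statements merged into one kernel-verified Lean document; each statement's English description precedes it below -/
import Mathlib

section
/- Let n ≥ 1 and let A be an n×n complex matrix. Then det A = (1/n!) · Σ_{σ ∈ S_n} ε(σ) · ∏_{c ≼ σ} Tr(A^{|c|}), where the product runs over all cycles c of σ (fixed points counting as cycles of length 1) and |c| denotes the length of the cycle c. -/
open Matrix Finset

/-- `i` is the minimal element of its `σ`-orbit (every orbit element is of the
form `σ ^ k i` for some `k < n`, since orbits have size at most `n`). -/
def IsOrbitRep {n : ℕ} (σ : Equiv.Perm (Fin n)) (i : Fin n) : Prop :=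
  ∀ k ∈ Finset.range n, i ≤ (σ ^ k) i

instance {n : ℕ} (σ : Equiv.Perm (Fin n)) : DecidablePred (IsOrbitRep σ) := by
  unfold IsOrbitRep; infer_instance

/-- The set of minimal representatives of the cycles of `σ` (one per cycle,
fixed points included as cycles of length 1). -/
def cycleReps {n : ℕ} (σ : Equiv.Perm (Fin n)) : Finset (Fin n) :=
  Finset.univ.filter (IsOrbitRep σ)

/-- The length of the cycle of `σ` containing `i` (equal to 1 at a fixed point). -/
noncomputable def cycleLen {n : ℕ} (σ : Equiv.Perm (Fin n)) (i : Fin n) : ℕ :=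
  Function.minimalPeriod (⇑σ) i

namespace DetCycleAux

variable {n : ℕ} (σ : Equiv.Perm (Fin n))

/-- minimal period of σ at a -/
noncomputable def L (a : Fin n) : ℕ := Function.minimalPeriod (⇑σ) a

lemma mem_pp (a : Fin n) : a ∈ Function.periodicPts ⇑σ :=
  ⟨orderOf σ, orderOf_pos σ, by
    simp [Function.IsPeriodicPt, Function.IsFixedPt, ← Equiv.Perm.coe_pow, pow_orderOf_eq_one]⟩

lemma L_pos (a : Fin n) : 0 < L σ a :=
  Function.minimalPeriod_pos_of_mem_periodicPts (mem_pp σ a)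

lemma pow_L (a : Fin n) : (σ ^ L σ a) a = a :=
  Function.isPeriodicPt_minimalPeriod (⇑σ) a

lemma pow_mod (a : Fin n) (k : ℕ) : (σ ^ (k % L σ a)) a = (σ ^ k) a :=
  Function.iterate_mod_minimalPeriod_eq (f := ⇑σ) (x := a) (n := k)

lemma L_le (a : Fin n) : L σ a ≤ n := by
  have hinj : (Set.Iio (L σ a)).InjOn (fun k => (σ ^ k) a) := by
    have := Function.iterate_injOn_Iio_minimalPeriod (f := ⇑σ) (x := a)
    simpa [L, ← Equiv.Perm.coe_pow] using this
  have := Finset.card_le_card_of_injOn (fun k => (σ ^ k) a)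
    (fun x _ => Finset.mem_univ _) (s := Finset.range (L σ a)) (t := Finset.univ)
    (fun x hx y hy hxy => hinj (by simpa using hx) (by simpa using hy) hxy)
  simpa using this


/-- the orbit of `a` under `σ`, as a Finset -/
def orb (a : Fin n) : Finset (Fin n) := (Finset.range n).image fun k => (σ ^ k) a

lemma pow_mem_orb (a : Fin n) (k : ℕ) : (σ ^ k) a ∈ orb σ a := by
  have h1 : k % L σ a < n := lt_of_lt_of_le (Nat.mod_lt _ (L_pos σ a)) (L_le σ a)
  have : (σ ^ (k % L σ a)) a = (σ ^ k) a := pow_mod σ a k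
  exact Finset.mem_image.2 ⟨k % L σ a, Finset.mem_range.2 h1, this⟩

lemma self_mem_orb (a : Fin n) : a ∈ orb σ a := by
  simpa using pow_mem_orb σ a 0

lemma orb_subset {a b : Fin n} (h : b ∈ orb σ a) : orb σ b ⊆ orb σ a := by
  obtain ⟨j, _, hj⟩ := Finset.mem_image.1 h
  intro x hx
  obtain ⟨k, _, hk⟩ := Finset.mem_image.1 hx
  subst hj hk
  rw [← Equiv.Perm.mul_apply, ← pow_add]
  exact pow_mem_orb σ a (k + j)

lemma mem_orb_symm {a b : Fin n} (h : b ∈ orb σ a) : a ∈ orb σ b := by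
  obtain ⟨j, _, hj⟩ := Finset.mem_image.1 h
  subst hj
  have key : (σ ^ (j * (L σ a - 1))) ((σ ^ j) a) = a := by
    rw [← Equiv.Perm.mul_apply, ← pow_add]
    have : j * (L σ a - 1) + j = (L σ a) * j := by
      have h1 : 1 ≤ L σ a := L_pos σ a
      cases' Nat.exists_eq_add_of_le h1 with m hm
      rw [hm]; simp; ring
    rw [this]
    have : ∀ m : ℕ, (σ ^ (L σ a * m)) a = a := by
      intro m
      induction m with
      | zero => simp
      | succ t ih =>
        rw [Nat.mul_succ, pow_add, Equiv.Perm.mul_apply, pow_L, ih]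
    exact this j
  have := pow_mem_orb σ ((σ ^ j) a) (j * (L σ a - 1))
  rwa [key] at this

lemma orb_eq {a b : Fin n} (h : b ∈ orb σ a) : orb σ b = orb σ a :=
  le_antisymm (orb_subset σ h) (orb_subset σ (mem_orb_symm σ h))

lemma apply_mem_orb {a i : Fin n} (h : i ∈ orb σ a) : σ i ∈ orb σ a := by
  obtain ⟨k, _, hk⟩ := Finset.mem_image.1 h
  subst hk
  rw [← Equiv.Perm.mul_apply, ← pow_succ']
  exact pow_mem_orb σ a (k + 1)

lemma apply_mem_orb_rev {a i : Fin n} (h : σ i ∈ orb σ a) : i ∈ orb σ a := by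
  have h1 : i ∈ orb σ (σ i) := by
    have h2 : (σ ^ (L σ (σ i) - 1)) (σ i) = i := by
      apply σ.injective
      rw [← Equiv.Perm.mul_apply, ← pow_succ']
      have : L σ (σ i) - 1 + 1 = L σ (σ i) := Nat.succ_pred_eq_of_pos (L_pos σ _)
      rw [this, pow_L]
    have := pow_mem_orb σ (σ i) (L σ (σ i) - 1)
    rwa [h2] at this
  exact (orb_eq σ h) ▸ h1

/-- the minimal representative of the orbit of `a` -/
def rp (a : Fin n) : Fin n := (orb σ a).min' ⟨a, self_mem_orb σ a⟩

lemma rp_mem (a : Fin n) : rp σ a ∈ orb σ a := Finset.min'_mem _ _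

lemma rp_le {a b : Fin n} (h : b ∈ orb σ a) : rp σ a ≤ b := Finset.min'_le _ _ h

lemma rp_eq_of_mem {a b : Fin n} (h : b ∈ orb σ a) : rp σ b = rp σ a := by
  unfold rp
  congr 1
  exact orb_eq σ h

lemma rp_rp (a : Fin n) : rp σ (rp σ a) = rp σ a := rp_eq_of_mem σ (rp_mem σ a)

lemma isOrbitRep_iff (i : Fin n) : _root_.IsOrbitRep σ i ↔ rp σ i = i := by
  constructor
  · intro h
    refine le_antisymm (rp_le σ (self_mem_orb σ i)) ?_
    obtain ⟨k, hk, hk2⟩ := Finset.mem_image.1 (rp_mem σ i)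
    rw [← hk2]
    exact h k hk
  · intro h k hk
    have : (σ ^ k) i ∈ orb σ i := Finset.mem_image.2 ⟨k, hk, rfl⟩
    calc i = rp σ i := h.symm
    _ ≤ (σ ^ k) i := rp_le σ this

lemma mem_orb_iff_rp {r b : Fin n} (hr : rp σ r = r) : b ∈ orb σ r ↔ rp σ b = r := by
  constructor
  · intro h; rw [rp_eq_of_mem σ h, hr]
  · intro h
    have : r ∈ orb σ b := h ▸ rp_mem σ b
    exact mem_orb_symm σ this

lemma card_orb (a : Fin n) : (orb σ a).card = L σ a := by
  have himg : orb σ a = (Finset.range (L σ a)).image fun k => (σ ^ k) a := by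
    apply le_antisymm
    · intro x hx
      obtain ⟨k, _, hk⟩ := Finset.mem_image.1 hx
      refine Finset.mem_image.2 ⟨k % L σ a, Finset.mem_range.2 (Nat.mod_lt _ (L_pos σ a)), ?_⟩
      rw [pow_mod]; exact hk
    · intro x hx
      obtain ⟨k, hk, hk2⟩ := Finset.mem_image.1 hx
      exact hk2 ▸ pow_mem_orb σ a k
  rw [himg]
  rw [Finset.card_image_of_injOn, Finset.card_range]
  intro x hx y hy hxy
  have hinj : (Set.Iio (L σ a)).InjOn (fun k => (σ ^ k) a) := by
    have := Function.iterate_injOn_Iio_minimalPeriod (f := ⇑σ) (x := a)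
    simpa [L, ← Equiv.Perm.coe_pow] using this
  exact hinj (by simpa using hx) (by simpa using hy) hxy


section Paths

variable {N : ℕ} (A : Matrix (Fin N) (Fin N) ℂ)

/-- extend `v : Fin L → Fin N` by `y` beyond `L` -/
def ext {L : ℕ} (v : Fin L → Fin N) (y : Fin N) : ℕ → Fin N :=
  fun k => if h : k < L then v ⟨k, h⟩ else y

lemma ext_cons_zero {L : ℕ} (j : Fin N) (v : Fin L → Fin N) (y : Fin N) :
    ext (Fin.cons j v) y 0 = j := by
  unfold ext
  rw [dif_pos (Nat.succ_pos L)]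
  simp

lemma ext_cons_succ {L : ℕ} (j : Fin N) (v : Fin L → Fin N) (y : Fin N) (k : ℕ) :
    ext (Fin.cons j v) y (k + 1) = ext v y k := by
  unfold ext
  by_cases h : k < L
  · rw [dif_pos (by omega : k + 1 < L + 1), dif_pos h]
    have h2 : (⟨k + 1, by omega⟩ : Fin (L + 1)) = Fin.succ ⟨k, h⟩ := rfl
    rw [h2, Fin.cons_succ]
  · rw [dif_neg (by omega), dif_neg h]

lemma pow_apply_path (L : ℕ) (y : Fin N) : ∀ x : Fin N,
    (A ^ (L + 1)) x y
      = ∑ v : Fin L → Fin N,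
          (A x (ext v y 0) * ∏ k ∈ Finset.range L, A (ext v y k) (ext v y (k + 1))) := by
  induction L with
  | zero =>
    intro x
    rw [pow_one]
    simp [ext]
  | succ L ih =>
    intro x
    rw [pow_succ', Matrix.mul_apply]
    simp_rw [ih]
    rw [← Equiv.sum_comp (Fin.consEquiv (fun _ : Fin (L + 1) => Fin N))
      (fun w => A x (ext w y 0) * ∏ k ∈ Finset.range (L + 1), A (ext w y k) (ext w y (k + 1)))]
    rw [Fintype.sum_prod_type]
    apply Finset.sum_congr rfl
    intro j _
    rw [Finset.mul_sum]
    apply Finset.sum_congr rfl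
    intro v _
    have hc : (Fin.consEquiv fun _ : Fin (L+1) => Fin N) (j, v) = Fin.cons j v := rfl
    rw [hc, ext_cons_zero, Finset.prod_range_succ']
    simp_rw [ext_cons_succ, ext_cons_zero]
    ring

def cext {M : ℕ} (u : Fin (M + 1) → Fin N) : ℕ → Fin N :=
  fun m => u ⟨m % (M + 1), Nat.mod_lt _ (Nat.succ_pos M)⟩

lemma cext_cons_zero {M : ℕ} (x : Fin N) (v : Fin M → Fin N) :
    cext (Fin.cons x v) 0 = x := by
  unfold cext
  have h2 : (⟨0 % (M + 1), Nat.mod_lt _ (Nat.succ_pos M)⟩ : Fin (M + 1)) = 0 := by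
    apply Fin.ext; simp
  rw [h2, Fin.cons_zero]

lemma cext_cons_eq_ext {M : ℕ} (x : Fin N) (v : Fin M → Fin N) (k : ℕ) (hk : k ≤ M) :
    cext (Fin.cons x v) (k + 1) = ext v x k := by
  unfold cext ext
  by_cases h : k < M
  · rw [dif_pos h]
    have hmod : (k + 1) % (M + 1) = k + 1 := Nat.mod_eq_of_lt (by omega)
    have h2 : (⟨(k + 1) % (M + 1), Nat.mod_lt _ (Nat.succ_pos M)⟩ : Fin (M + 1))
        = Fin.succ ⟨k, h⟩ := by apply Fin.ext; simp [hmod]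
    rw [h2, Fin.cons_succ]
  · rw [dif_neg h]
    have h2 : (⟨(k + 1) % (M + 1), Nat.mod_lt _ (Nat.succ_pos M)⟩ : Fin (M + 1)) = 0 := by
      apply Fin.ext
      simp only [Fin.val_zero]
      rw [show k = M by omega]
      exact Nat.mod_self (M + 1)
    rw [h2, Fin.cons_zero]

lemma trace_pow_cyc (M : ℕ) :
    (A ^ (M + 1)).trace
      = ∑ u : Fin (M + 1) → Fin N, ∏ k ∈ Finset.range (M + 1), A (cext u k) (cext u (k + 1)) := by
  rw [Matrix.trace]
  rw [← Equiv.sum_comp (Fin.consEquiv (fun _ : Fin (M + 1) => Fin N))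
    (fun u => ∏ k ∈ Finset.range (M + 1), A (cext u k) (cext u (k + 1)))]
  rw [Fintype.sum_prod_type]
  apply Finset.sum_congr rfl
  intro x _
  rw [Matrix.diag_apply, pow_apply_path A M x x]
  apply Finset.sum_congr rfl
  intro v _
  have hc : (Fin.consEquiv fun _ : Fin (M + 1) => Fin N) (x, v) = Fin.cons x v := rfl
  rw [hc, Finset.prod_range_succ', cext_cons_zero, cext_cons_eq_ext x v 0 (Nat.zero_le M)]
  have hfac : ∀ k ∈ Finset.range M,
      A (cext (Fin.cons x v) (k + 1)) (cext (Fin.cons x v) (k + 1 + 1))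
        = A (ext v x k) (ext v x (k + 1)) := by
    intro k hk
    have hk' := Finset.mem_range.1 hk
    rw [cext_cons_eq_ext x v k (by omega), cext_cons_eq_ext x v (k + 1) (by omega)]
  rw [Finset.prod_congr rfl hfac]
  ring

/-- summing a function of `f ∘ e` over all `f` overcounts by `N ^ (N - L)`. -/
lemma sum_comp_inj {L : ℕ} (hN : 0 < N) (hL : 0 < L) (e : Fin L → Fin N) (he : Function.Injective e)
    (W : (Fin L → Fin N) → ℂ) :
    ∑ f : Fin N → Fin N, W (fun k => f (e k))
      = (N : ℂ) ^ (N - L) * ∑ u : Fin L → Fin N, W u := by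
  classical
  haveI : Nonempty (Fin N) := ⟨⟨0, hN⟩⟩
  haveI : Nonempty (Fin L) := ⟨⟨0, hL⟩⟩
  let p : Fin N → Prop := fun x => x ∈ Set.range e
  haveI : DecidablePred p := Classical.decPred p
  let Ψ : (Fin N → Fin N) ≃ ((Fin L → Fin N) × ({x : Fin N // ¬ p x} → Fin N)) :=
    { toFun := fun f => (fun k => f (e k), fun x => f x.1)
      invFun := fun q x => if h : p x then q.1 (Function.invFun e x) else q.2 ⟨x, h⟩
      left_inv := by
        intro f
        funext x
        show (if h : p x then f (e (Function.invFun e x)) else f x) = f x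
        by_cases h : p x
        · rw [dif_pos h]
          obtain ⟨k, hk⟩ := h
          rw [← hk, Function.leftInverse_invFun he k]
        · rw [dif_neg h]
      right_inv := by
        intro q
        refine Prod.ext ?_ ?_
        · funext k
          show (if h : p (e k) then q.1 (Function.invFun e (e k)) else _) = q.1 k
          rw [dif_pos ⟨k, rfl⟩, Function.leftInverse_invFun he k]
        · funext x
          show (if h : p x.1 then _ else q.2 ⟨x.1, h⟩) = q.2 x
          rw [dif_neg x.2] }
  have hfirst : ∀ q : ((Fin L → Fin N) × ({x : Fin N // ¬ p x} → Fin N)),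
      (fun k => (Ψ.symm q) (e k)) = q.1 := by
    intro q
    funext k
    show (if h : p (e k) then q.1 (Function.invFun e (e k)) else _) = q.1 k
    rw [dif_pos ⟨k, rfl⟩, Function.leftInverse_invFun he k]
  have : ∑ f : Fin N → Fin N, W (fun k => f (e k))
      = ∑ q : ((Fin L → Fin N) × ({x : Fin N // ¬ p x} → Fin N)),
          W (fun k => (Ψ.symm q) (e k)) :=
    (Equiv.sum_comp Ψ.symm (fun f => W (fun k => f (e k)))).symm
  rw [this]
  have : ∑ q : ((Fin L → Fin N) × ({x : Fin N // ¬ p x} → Fin N)),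
      W (fun k => (Ψ.symm q) (e k))
      = ∑ q : ((Fin L → Fin N) × ({x : Fin N // ¬ p x} → Fin N)), W q.1 := by
    apply Finset.sum_congr rfl
    intro q _
    rw [hfirst q]
  rw [this, Fintype.sum_prod_type]
  have hred : ∀ u : Fin L → Fin N, ∑ y : ({x : Fin N // ¬ p x} → Fin N), W (u, y).1
      = ∑ _y : ({x : Fin N // ¬ p x} → Fin N), W u := fun u => Finset.sum_congr rfl fun _ _ => rfl
  have hcard : Fintype.card ({x : Fin N // ¬ p x} → Fin N) = N ^ (N - L) := by
    rw [Fintype.card_fun, Fintype.card_fin]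
    congr 1
    rw [Fintype.card_subtype_compl]
    congr 1
    · exact Fintype.card_fin N
    · rw [show Fintype.card {x : Fin N // p x} = Fintype.card (Set.range e) from rfl,
        ← Fintype.card_congr (Equiv.ofInjective e he), Fintype.card_fin]
  rw [Finset.mul_sum]
  apply Finset.sum_congr rfl
  intro u _
  rw [hred u, Finset.sum_const, Finset.card_univ, hcard, nsmul_eq_mul]
  push_cast
  ring

end Paths

lemma orb_eq_image {n : ℕ} (σ : Equiv.Perm (Fin n)) (a : Fin n) :
    orb σ a = (Finset.range (L σ a)).image fun k => (σ ^ k) a := by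
  apply le_antisymm
  · intro x hx
    obtain ⟨k, _, hk⟩ := Finset.mem_image.1 hx
    refine Finset.mem_image.2 ⟨k % L σ a, Finset.mem_range.2 (Nat.mod_lt _ (L_pos σ a)), ?_⟩
    rw [pow_mod]; exact hk
  · intro x hx
    obtain ⟨k, hk, hk2⟩ := Finset.mem_image.1 hx
    exact hk2 ▸ pow_mem_orb σ a k

lemma pow_injOn {n : ℕ} (σ : Equiv.Perm (Fin n)) (a : Fin n) :
    (Set.Iio (L σ a)).InjOn (fun k => (σ ^ k) a) := by
  have := Function.iterate_injOn_Iio_minimalPeriod (f := ⇑σ) (x := a)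
  simpa [L, ← Equiv.Perm.coe_pow] using this

lemma orbit_sum {n : ℕ} (σ : Equiv.Perm (Fin n)) (A : Matrix (Fin n) (Fin n) ℂ) (r : Fin n) :
    ∑ f : Fin n → Fin n, ∏ i ∈ orb σ r, A (f i) (f (σ i))
      = (n : ℂ) ^ (n - L σ r) * (A ^ (L σ r)).trace := by
  obtain ⟨M, hM⟩ : ∃ M, L σ r = M + 1 := ⟨L σ r - 1, by have := L_pos σ r; omega⟩
  have hN : 0 < n := r.pos
  set e : Fin (M + 1) → Fin n := fun k => (σ ^ (k : ℕ)) r with he_def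
  have he : Function.Injective e := by
    intro x y hxy
    have := pow_injOn σ r (show (x : ℕ) ∈ Set.Iio (L σ r) by rw [hM]; exact x.isLt)
      (show (y : ℕ) ∈ Set.Iio (L σ r) by rw [hM]; exact y.isLt) hxy
    exact Fin.ext this
  have cext_eq : ∀ (f : Fin n → Fin n) (m : ℕ),
      cext (fun j => f (e j)) m = f ((σ ^ m) r) := by
    intro f m
    show f ((σ ^ ((m % (M + 1)) : ℕ)) r) = f ((σ ^ m) r)
    rw [← hM, pow_mod]
  have step1 : ∀ f : Fin n → Fin n, ∏ i ∈ orb σ r, A (f i) (f (σ i))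
      = ∏ k ∈ Finset.range (M + 1),
          A (cext (fun j => f (e j)) k) (cext (fun j => f (e j)) (k + 1)) := by
    intro f
    rw [orb_eq_image σ r, Finset.prod_image
      (fun x hx y hy hxy => pow_injOn σ r (by simpa using Finset.mem_range.1 hx)
        (by simpa using Finset.mem_range.1 hy) hxy), hM]
    apply Finset.prod_congr rfl
    intro k hk
    rw [cext_eq, cext_eq]
    congr 1
    rw [pow_succ', Equiv.Perm.mul_apply]
  calc ∑ f : Fin n → Fin n, ∏ i ∈ orb σ r, A (f i) (f (σ i))
      = ∑ f : Fin n → Fin n, (fun u => ∏ k ∈ Finset.range (M + 1),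
          A (cext u k) (cext u (k + 1))) (fun j => f (e j)) :=
        Finset.sum_congr rfl fun f _ => step1 f
    _ = (n : ℂ) ^ (n - (M + 1)) * ∑ u : Fin (M + 1) → Fin n,
          ∏ k ∈ Finset.range (M + 1), A (cext u k) (cext u (k + 1)) :=
        sum_comp_inj hN (Nat.succ_pos M) e he
          (fun u => ∏ k ∈ Finset.range (M + 1), A (cext u k) (cext u (k + 1)))
    _ = (n : ℂ) ^ (n - L σ r) * (A ^ (L σ r)).trace := by
        rw [← trace_pow_cyc, hM]

lemma split_sum {n : ℕ} (s : Finset (Fin n)) (P Q : (Fin n → Fin n) → ℂ)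
    (hP : ∀ f g, (∀ i ∈ s, f i = g i) → P f = P g)
    (hQ : ∀ f g, (∀ i ∉ s, f i = g i) → Q f = Q g) :
    ((n : ℂ) ^ n) * ∑ h : Fin n → Fin n, P h * Q h
      = (∑ f : Fin n → Fin n, P f) * (∑ g : Fin n → Fin n, Q g) := by
  classical
  let m : (Fin n → Fin n) → (Fin n → Fin n) → (Fin n → Fin n) :=
    fun f g i => if i ∈ s then f i else g i
  have hinv : Function.Involutive (fun p : (Fin n → Fin n) × (Fin n → Fin n) =>
      (m p.1 p.2, m p.2 p.1)) := by
    intro p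
    refine Prod.ext ?_ ?_ <;> funext i <;> by_cases h : i ∈ s <;> simp [m, h]
  have key : ∀ R : (Fin n → Fin n) → ℂ,
      ∑ p : (Fin n → Fin n) × (Fin n → Fin n), R (m p.1 p.2)
        = (n : ℂ) ^ n * ∑ h : Fin n → Fin n, R h := by
    intro R
    have h1 : ∑ p : (Fin n → Fin n) × (Fin n → Fin n), R (m p.1 p.2)
        = ∑ p : (Fin n → Fin n) × (Fin n → Fin n), R p.1 :=
      Equiv.sum_comp hinv.toPerm (fun p : (Fin n → Fin n) × (Fin n → Fin n) => R p.1)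
    rw [h1, Fintype.sum_prod_type]
    have h2 : ∀ a : Fin n → Fin n, ∑ b : Fin n → Fin n, R (a, b).1 = (n : ℂ) ^ n * R a := by
      intro a
      have h3 : ∑ b : Fin n → Fin n, R (a, b).1 = ∑ _b : Fin n → Fin n, R a := rfl
      rw [h3, Finset.sum_const, Finset.card_univ, Fintype.card_fun, Fintype.card_fin,
        nsmul_eq_mul]
      push_cast
      ring
    rw [Finset.sum_congr rfl (fun a _ => h2 a), ← Finset.mul_sum]
  calc ((n : ℂ) ^ n) * ∑ h : Fin n → Fin n, P h * Q h
      = ∑ p : (Fin n → Fin n) × (Fin n → Fin n), P (m p.1 p.2) * Q (m p.1 p.2) :=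
        (key (fun h => P h * Q h)).symm
    _ = ∑ p : (Fin n → Fin n) × (Fin n → Fin n), P p.1 * Q p.2 := by
        apply Finset.sum_congr rfl
        intro p _
        congr 1
        · exact hP _ _ (fun i hi => if_pos hi)
        · exact hQ _ _ (fun i hi => if_neg hi)
    _ = (∑ f : Fin n → Fin n, P f) * (∑ g : Fin n → Fin n, Q g) := by
        rw [Finset.sum_mul_sum, Fintype.sum_prod_type]

lemma main_sum {n : ℕ} (σ : Equiv.Perm (Fin n)) (A : Matrix (Fin n) (Fin n) ℂ)
    (s : Finset (Fin n)) : (∀ i ∈ s, σ i ∈ s) →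
    ∑ f : Fin n → Fin n, ∏ i ∈ s, A (f i) (f (σ i))
      = (n : ℂ) ^ (n - s.card) * ∏ r ∈ s.filter (fun x => rp σ x = x), (A ^ (L σ r)).trace := by
  induction s using Finset.strongInduction with
  | _ s ih =>
    intro hs
    rcases Finset.eq_empty_or_nonempty s with rfl | ⟨a, ha⟩
    · simp only [Finset.prod_empty, Finset.filter_empty, Finset.card_empty, Nat.sub_zero]
      rw [Finset.sum_const, Finset.card_univ, Fintype.card_fun, Fintype.card_fin, nsmul_eq_mul]
      push_cast
      ring
    · set r := rp σ a with hr_def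
      have hrr : rp σ r = r := rp_rp σ a
      have hpow_mem : ∀ k : ℕ, (σ ^ k) a ∈ s := by
        intro k
        induction k with
        | zero => simpa using ha
        | succ t iht =>
          rw [pow_succ', Equiv.Perm.mul_apply]
          exact hs _ iht
      have horb_sub : orb σ r ⊆ s := by
        rw [show orb σ r = orb σ a from orb_eq σ (rp_mem σ a)]
        intro x hx
        obtain ⟨k, _, hk⟩ := Finset.mem_image.1 hx
        exact hk ▸ hpow_mem k
      have hr_s : r ∈ s := horb_sub (self_mem_orb σ r)
      set s' := s \ orb σ r with hs'_def
      have hsub : s' ⊂ s := Finset.sdiff_ssubset horb_sub ⟨r, self_mem_orb σ r⟩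
      have hs' : ∀ i ∈ s', σ i ∈ s' := by
        intro i hi
        rcases Finset.mem_sdiff.1 hi with ⟨his, hio⟩
        exact Finset.mem_sdiff.2 ⟨hs i his, fun hσo => hio (apply_mem_orb_rev σ hσo)⟩
      have hP : ∀ f g : Fin n → Fin n, (∀ i ∈ orb σ r, f i = g i) →
          (∏ i ∈ orb σ r, A (f i) (f (σ i))) = ∏ i ∈ orb σ r, A (g i) (g (σ i)) := by
        intro f g hfg
        apply Finset.prod_congr rfl
        intro i hi
        rw [hfg i hi, hfg (σ i) (apply_mem_orb σ hi)]
      have hQ : ∀ f g : Fin n → Fin n, (∀ i ∉ orb σ r, f i = g i) →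
          (∏ i ∈ s', A (f i) (f (σ i))) = ∏ i ∈ s', A (g i) (g (σ i)) := by
        intro f g hfg
        apply Finset.prod_congr rfl
        intro i hi
        rw [hfg i (Finset.mem_sdiff.1 hi).2,
          hfg (σ i) (Finset.mem_sdiff.1 (hs' i hi)).2]
      have hkey := split_sum (orb σ r) (fun f => ∏ i ∈ orb σ r, A (f i) (f (σ i)))
        (fun f => ∏ i ∈ s', A (f i) (f (σ i))) hP hQ
      have hPsum := orbit_sum σ A r
      have hQsum := ih s' hsub hs'
      have hfil : s.filter (fun x => rp σ x = x)
          = insert r (s'.filter (fun x => rp σ x = x)) := by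
        ext x
        simp only [Finset.mem_filter, Finset.mem_insert, hs'_def, Finset.mem_sdiff]
        constructor
        · rintro ⟨hxs, hx⟩
          by_cases hxo : x ∈ orb σ r
          · left
            have := (mem_orb_iff_rp σ hrr).1 hxo
            rw [← this, hx]
          · right; exact ⟨⟨hxs, hxo⟩, hx⟩
        · rintro (rfl | ⟨⟨hx1, _⟩, hx2⟩)
          · exact ⟨hr_s, hrr⟩
          · exact ⟨hx1, hx2⟩
      have hrnot : r ∉ s'.filter (fun x => rp σ x = x) := by
        simp only [Finset.mem_filter, hs'_def, Finset.mem_sdiff]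
        intro h
        exact absurd (self_mem_orb σ r) h.1.2
      have hLn : L σ r ≤ n := L_le σ r
      have hcards : s.card = L σ r + s'.card := by
        rw [hs'_def, Finset.card_sdiff_of_subset horb_sub, card_orb]
        have h4 := Finset.card_le_card horb_sub
        rw [card_orb] at h4
        omega
      have hsn : s.card ≤ n := by
        simpa using Finset.card_le_card (Finset.subset_univ s)
      have hn0 : (n : ℂ) ≠ 0 := Nat.cast_ne_zero.2 (by have := a.pos; omega)
      apply mul_left_cancel₀ (pow_ne_zero n hn0)
      have hLHS : (∑ f : Fin n → Fin n, ∏ i ∈ s, A (f i) (f (σ i)))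
          = ∑ f : Fin n → Fin n,
              (fun f => ∏ i ∈ orb σ r, A (f i) (f (σ i))) f *
              (fun f => ∏ i ∈ s', A (f i) (f (σ i))) f := by
        apply Finset.sum_congr rfl
        intro f _
        rw [← Finset.prod_sdiff horb_sub, ← hs'_def]
        ring
      rw [hLHS, hkey, hPsum, hQsum, hfil, Finset.prod_insert hrnot]
      rw [show (n : ℂ) ^ n * ((n : ℂ) ^ (n - s.card) *
            ((A ^ (L σ r)).trace * ∏ x ∈ s'.filter (fun x => rp σ x = x), (A ^ (L σ x)).trace))
          = ((n : ℂ) ^ n * (n : ℂ) ^ (n - s.card)) *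
            ((A ^ (L σ r)).trace * ∏ x ∈ s'.filter (fun x => rp σ x = x), (A ^ (L σ x)).trace)
          from by ring]
      rw [← pow_add, show n + (n - s.card) = (n - L σ r) + (n - s'.card) from by omega, pow_add]
      ring

end DetCycleAux

open DetCycleAux

/-- For an `n × n` complex matrix `A` (with `n ≥ 1`),
`det A = (1/n!) · Σ_{σ ∈ S_n} ε(σ) · ∏_{c ≼ σ} Tr(A^{|c|})`, where the product runs
over the cycles of `σ` (fixed points counting as cycles of length 1, the cycle of
`i` having length `cycleLen σ i`), each cycle being represented by its minimal
element. -/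
theorem det_eq_inv_factorial_sum_sign_prod_trace_pow
    (n : ℕ) (hn : 1 ≤ n) (A : Matrix (Fin n) (Fin n) ℂ) :
    A.det = (1 / (n.factorial : ℂ)) *
      ∑ σ : Equiv.Perm (Fin n),
        ((Equiv.Perm.sign σ : ℤ) : ℂ) *
          ∏ i ∈ cycleReps σ, (A ^ (cycleLen σ i)).trace := by
  classical
  have hmain : ∀ σ : Equiv.Perm (Fin n),
      ∏ i ∈ cycleReps σ, (A ^ (cycleLen σ i)).trace
        = ∑ f : Fin n → Fin n, ∏ i : Fin n, A (f i) (f (σ i)) := by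
    intro σ
    have h1 := main_sum σ A Finset.univ (by simp)
    rw [Finset.card_univ, Fintype.card_fin, Nat.sub_self, pow_zero, one_mul] at h1
    have hcr : cycleReps σ = Finset.univ.filter (fun x => rp σ x = x) := by
      ext x
      simp only [cycleReps, Finset.mem_filter, Finset.mem_univ, true_and]
      exact isOrbitRep_iff σ x
    rw [hcr]
    exact h1.symm
  have hdet : ∀ f : Fin n → Fin n,
      (∑ σ : Equiv.Perm (Fin n), ((Equiv.Perm.sign σ : ℤ) : ℂ) * ∏ i : Fin n, A (f i) (f (σ i)))
        = (A.submatrix f f).det := by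
    intro f
    rw [← Matrix.det_transpose, Matrix.det_apply']
    apply Finset.sum_congr rfl
    intro σ _
    congr 1
  have hzero : ∀ f : Fin n → Fin n, ¬ Function.Injective f → (A.submatrix f f).det = 0 := by
    intro f hf
    obtain ⟨i, j, hij, hne⟩ := Function.not_injective_iff.1 hf
    apply Matrix.det_zero_of_row_eq hne
    funext k
    show A (f i) (f k) = A (f j) (f k)
    rw [hij]
  have hinj : ∀ f : Fin n → Fin n, Function.Injective f → (A.submatrix f f).det = A.det := by
    intro f hf
    have hb : Function.Bijective f := Finite.injective_iff_bijective.1 hf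
    have he : A.submatrix f f = A.submatrix (Equiv.ofBijective f hb) (Equiv.ofBijective f hb) :=
      rfl
    rw [he, Matrix.det_submatrix_equiv_self]
  have hcard : (Finset.univ.filter (fun f : Fin n → Fin n => Function.Injective f)).card
      = n.factorial := by
    have e : Equiv.Perm (Fin n) ≃ {f : Fin n → Fin n // Function.Injective f} :=
      { toFun := fun σ => ⟨⇑σ, σ.injective⟩
        invFun := fun f => Equiv.ofBijective f.1 (Finite.injective_iff_bijective.1 f.2)
        left_inv := fun σ => Equiv.ext fun x => rfl
        right_inv := fun f => Subtype.ext rfl }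
    rw [← Fintype.card_subtype, ← Fintype.card_congr e, Fintype.card_perm, Fintype.card_fin]
  have hsum : ∑ f : Fin n → Fin n, (A.submatrix f f).det = (n.factorial : ℂ) * A.det := by
    rw [← Finset.sum_filter_add_sum_filter_not Finset.univ
      (fun f : Fin n → Fin n => Function.Injective f) (fun f => (A.submatrix f f).det)]
    rw [Finset.sum_eq_zero (fun f hf => hzero f (Finset.mem_filter.1 hf).2), add_zero]
    rw [Finset.sum_congr rfl (fun f hf => hinj f (Finset.mem_filter.1 hf).2)]
    rw [Finset.sum_const, hcard, nsmul_eq_mul]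
  have hfac : (n.factorial : ℂ) ≠ 0 := Nat.cast_ne_zero.2 n.factorial_ne_zero
  calc A.det = (1 / (n.factorial : ℂ)) * ((n.factorial : ℂ) * A.det) := by
        field_simp
    _ = (1 / (n.factorial : ℂ)) * ∑ f : Fin n → Fin n, (A.submatrix f f).det := by rw [hsum]
    _ = (1 / (n.factorial : ℂ)) * ∑ f : Fin n → Fin n,
          ∑ σ : Equiv.Perm (Fin n), ((Equiv.Perm.sign σ : ℤ) : ℂ) * ∏ i : Fin n, A (f i) (f (σ i)) := by
        rw [Finset.sum_congr rfl (fun f _ => (hdet f).symm)]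
    _ = (1 / (n.factorial : ℂ)) * ∑ σ : Equiv.Perm (Fin n),
          ∑ f : Fin n → Fin n, ((Equiv.Perm.sign σ : ℤ) : ℂ) * ∏ i : Fin n, A (f i) (f (σ i)) := by
        rw [Finset.sum_comm]
    _ = (1 / (n.factorial : ℂ)) * ∑ σ : Equiv.Perm (Fin n),
          ((Equiv.Perm.sign σ : ℤ) : ℂ) * ∏ i ∈ cycleReps σ, (A ^ (cycleLen σ i)).trace := by
        congr 1
        apply Finset.sum_congr rfl
        intro σ _
        rw [hmain σ, Finset.mul_sum]
end

section
/- Let A be an n×n complex matrix with the given block structure. Then det A = (1/(n_1!⋯n_p!)) · Σ_{σ ∈ S_n} ε(σ) · ∏_{(i_1 ⋯ i_r) ≼ σ} Tr( A_{[bl(i_1) bl(i_2)]} A_{[bl(i_2) bl(i_3)]} ⋯ A_{[bl(i_r) bl(i_1)]} ), where the product runs over all cycles (i_1 ⋯ i_r) of σ (fixed points counting as cycles of length 1). -/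
open Matrix

/-- The block `A_{[ab]}` of `A`, padded by zeros to an `n × n` matrix.
Traces of products of such padded blocks along a cyclic sequence of compatible
block indices agree with the traces of the products of the genuine rectangular
blocks. -/
def blockPad {ι κ R : Type*} [DecidableEq κ] [Zero R] (bl : ι → κ)
    (A : Matrix ι ι R) (a b : κ) : Matrix ι ι R :=
  Matrix.of fun i j => if bl i = a ∧ bl j = b then A i j else 0

/-- `Tr(A_{[bl i₁, bl i₂]} ⋯ A_{[bl iᵣ, bl i₁]})` where `(i₁ ⋯ iᵣ)` is the cycle of `σ`
through `i = i₁` (of length `r = minimalPeriod σ i`, `i_{k+1} = σ i_k`). -/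
noncomputable def cycleBlockTrace {n p : ℕ} {R : Type*} [CommRing R] (bl : Fin n → Fin p)
    (A : Matrix (Fin n) (Fin n) R) (σ : Equiv.Perm (Fin n)) (i : Fin n) : R :=
  (((List.range (Function.minimalPeriod (⇑σ) i)).map
      fun k => blockPad bl A (bl ((σ ^ k) i)) (bl ((σ ^ (k + 1)) i))).prod).trace

namespace BlockDet

open Equiv Function

variable {n : ℕ}

section Orbits

variable (σ : Equiv.Perm (Fin n))

lemma mem_periodicPts (i : Fin n) : i ∈ Function.periodicPts ⇑σ :=
  ⟨orderOf σ, orderOf_pos σ, by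
    simp [Function.IsPeriodicPt, Function.IsFixedPt, ← Equiv.Perm.coe_pow, pow_orderOf_eq_one]⟩

lemma mp_pos (i : Fin n) : 0 < Function.minimalPeriod ⇑σ i :=
  Function.minimalPeriod_pos_of_mem_periodicPts (mem_periodicPts σ i)

lemma pow_mp (i : Fin n) : (σ ^ Function.minimalPeriod ⇑σ i) i = i := by
  rw [Equiv.Perm.coe_pow]; exact Function.iterate_minimalPeriod

lemma pow_mod_mp (i : Fin n) (k : ℕ) :
    (σ ^ (k % Function.minimalPeriod ⇑σ i)) i = (σ ^ k) i := by
  rw [Equiv.Perm.coe_pow, Equiv.Perm.coe_pow]; exact Function.iterate_mod_minimalPeriod_eq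

lemma pow_inj_mp (i : Fin n) {k l : ℕ} (hk : k < Function.minimalPeriod ⇑σ i)
    (hl : l < Function.minimalPeriod ⇑σ i) (h : (σ ^ k) i = (σ ^ l) i) : k = l := by
  apply Function.iterate_injOn_Iio_minimalPeriod hk hl
  show (⇑σ)^[k] i = (⇑σ)^[l] i
  rwa [← Equiv.Perm.coe_pow, ← Equiv.Perm.coe_pow]

lemma mp_le (i : Fin n) : Function.minimalPeriod ⇑σ i ≤ n := by
  have h := Finset.card_le_card_of_injOn (fun k => (σ ^ k) i)
    (fun _ _ => Finset.mem_univ _) (s := Finset.range (Function.minimalPeriod ⇑σ i))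
    (t := (Finset.univ : Finset (Fin n))) ?_
  · simpa using h
  · intro a ha b hb hab
    exact pow_inj_mp σ i (by simpa using ha) (by simpa using hb) hab

lemma exists_pow_lt_mp {x y : Fin n} (h : σ.SameCycle x y) :
    ∃ k, k < Function.minimalPeriod ⇑σ x ∧ (σ ^ k) x = y := by
  obtain ⟨m, _, rfl⟩ := h.exists_pow_eq'
  exact ⟨m % Function.minimalPeriod ⇑σ x, Nat.mod_lt _ (mp_pos σ x), pow_mod_mp σ x m⟩

/-- The minimal element of the `σ`-orbit of `x`. -/
def orbitRep (x : Fin n) : Fin n :=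
  (Finset.univ.filter (σ.SameCycle x)).min' ⟨x, by simp [Equiv.Perm.SameCycle.refl]⟩

lemma sameCycle_orbitRep (x : Fin n) : σ.SameCycle x (orbitRep σ x) := by
  have := Finset.min'_mem (Finset.univ.filter (σ.SameCycle x))
    ⟨x, by simp [Equiv.Perm.SameCycle.refl]⟩
  simpa [orbitRep] using this

lemma isOrbitRep_orbitRep (x : Fin n) : IsOrbitRep σ (orbitRep σ x) := by
  intro k _
  apply Finset.min'_le
  simp only [Finset.mem_filter, Finset.mem_univ, true_and]
  exact (sameCycle_orbitRep σ x).trans ⟨(k : ℤ), by simp⟩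

lemma isOrbitRep_eq {i j : Fin n} (hi : IsOrbitRep σ i) (hj : IsOrbitRep σ j)
    (h : σ.SameCycle i j) : i = j := by
  obtain ⟨k, hk, rfl⟩ := exists_pow_lt_mp σ h
  obtain ⟨l, hl, hlj⟩ := exists_pow_lt_mp σ h.symm
  refine le_antisymm (hi k (Finset.mem_range.2 (lt_of_lt_of_le hk (mp_le σ i)))) ?_
  have := hj l (Finset.mem_range.2 (lt_of_lt_of_le hl (mp_le σ _)))
  rwa [hlj] at this

/-- The orbits of `σ` (indexed by their minimal representatives, the points of each
orbit being indexed by `Fin (minimalPeriod)`) partition `Fin n`. -/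
noncomputable def orbEquiv :
    (Σ i : {i : Fin n // IsOrbitRep σ i}, Fin (Function.minimalPeriod ⇑σ i.1)) ≃ Fin n := by
  refine Equiv.ofBijective (fun s => (σ ^ (s.2 : ℕ)) s.1.1) ⟨?_, ?_⟩
  · rintro ⟨⟨i, hi⟩, k⟩ ⟨⟨j, hj⟩, l⟩ hij
    simp only at hij
    have hijc : σ.SameCycle i j := by
      have h1 : σ.SameCycle i ((σ ^ (k : ℕ)) i) := ⟨(k : ℤ), by simp⟩
      have h2 : σ.SameCycle j ((σ ^ (l : ℕ)) j) := ⟨(l : ℤ), by simp⟩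
      exact (h1.trans (hij ▸ h2.symm))
    have : i = j := isOrbitRep_eq σ hi hj hijc
    subst this
    have : (k : ℕ) = (l : ℕ) := pow_inj_mp σ i k.2 l.2 hij
    have : k = l := Fin.ext this
    subst this
    rfl
  · intro x
    obtain ⟨k, hk, hkx⟩ := exists_pow_lt_mp σ (sameCycle_orbitRep σ x).symm
    exact ⟨⟨⟨orbitRep σ x, isOrbitRep_orbitRep σ x⟩, ⟨k, hk⟩⟩, hkx⟩

@[simp] lemma orbEquiv_apply (s : Σ i : {i : Fin n // IsOrbitRep σ i},
    Fin (Function.minimalPeriod ⇑σ i.1)) : orbEquiv σ s = (σ ^ (s.2 : ℕ)) s.1.1 := rfl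

end Orbits

section Paths

/-- Prepend a starting point to a path. -/
def pth {r : ℕ} (x : Fin n) (c : Fin r → Fin n) : Fin (r + 1) → Fin n := Fin.cons x c

@[simp] lemma pth_succ {r : ℕ} (x : Fin n) (c : Fin r → Fin n) (j : Fin r) :
    pth x c j.succ = c j := by simp [pth]

lemma fin_zero_sub_one (m : ℕ) : (0 : Fin (m+1)) - 1 = Fin.last m := by
  ext; simp [Fin.sub_def]

lemma fin_succ_sub_one (m : ℕ) (j : Fin m) : (j.succ : Fin (m+1)) - 1 = j.castSucc := by
  match m, j with
  | m + 1, j =>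
    ext
    simp only [Fin.sub_def, Fin.val_one, Fin.val_succ, Fin.coe_castSucc]
    have : (m + 1 + 1 - 1 + (↑j + 1)) = (m + 1 + 1) + ↑j := by omega
    rw [this, Nat.add_mod_left]
    exact Nat.mod_eq_of_lt (by omega)

lemma pth_castSucc_last (m : ℕ) (c : Fin (m+1) → Fin n) (k : Fin (m+1)) :
    pth (c (Fin.last m)) c k.castSucc = c (k - 1) := by
  induction k using Fin.cases with
  | zero => rw [fin_zero_sub_one]; rfl
  | succ j => rw [← Fin.succ_castSucc, pth_succ, fin_succ_sub_one]

lemma listProd_entry (r : ℕ) (M : ℕ → Matrix (Fin n) (Fin n) ℂ) (x y : Fin n) :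
    (((List.range r).map M).prod) x y =
      ∑ c : Fin r → Fin n,
        if pth x c (Fin.last r) = y then
          ∏ k : Fin r, M k (pth x c k.castSucc) (pth x c k.succ) else 0 := by
  induction r generalizing M x with
  | zero =>
      have : ∀ c : Fin 0 → Fin n, pth x c (Fin.last 0) = x := fun c => rfl
      simp only [this]
      simp [Matrix.one_apply]
  | succ r ih =>
      rw [List.range_succ_eq_map, List.map_cons, List.prod_cons, List.map_map, Matrix.mul_apply]
      have hxy : ∀ z, (((List.range r).map (M ∘ Nat.succ)).prod) z y =
          ∑ c : Fin r → Fin n,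
            if pth z c (Fin.last r) = y then
              ∏ k : Fin r, M (k + 1) (pth z c k.castSucc) (pth z c k.succ) else 0 :=
        fun z => ih (M ∘ Nat.succ) z
      simp_rw [hxy]
      rw [Fintype.sum_equiv ((Fin.consEquiv fun _ => Fin n).symm)
        (fun c : Fin (r+1) → Fin n =>
          if pth x c (Fin.last (r+1)) = y then
            ∏ k : Fin (r+1), M k (pth x c k.castSucc) (pth x c k.succ) else 0)
        (fun zc : Fin n × (Fin r → Fin n) =>
          M 0 x zc.1 * if pth zc.1 zc.2 (Fin.last r) = y then
            ∏ k : Fin r, M (k + 1) (pth zc.1 zc.2 k.castSucc) (pth zc.1 zc.2 k.succ)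
          else 0) ?_]
      · rw [Fintype.sum_prod_type]
        simp [Finset.mul_sum]
      · intro c
        have hc : c = pth (c 0) (fun j => c j.succ) := (Fin.cons_self_tail c).symm
        simp only [Fin.consEquiv_symm_apply]
        rw [hc]
        have hlast : pth x (pth (c 0) fun j => c j.succ) (Fin.last (r+1)) =
            pth (c 0) (fun j => c j.succ) (Fin.last r) := by
          rw [← Fin.succ_last, pth_succ]
        rw [hlast]
        rw [Fin.prod_univ_succ]
        have h0 : pth x (pth (c 0) fun j => c j.succ) ((0 : Fin (r+1)).castSucc) = x := rfl
        have h1 : pth x (pth (c 0) fun j => c j.succ) ((0 : Fin (r+1)).succ) = c 0 := by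
          rw [pth_succ]; rfl
        rw [h0, h1]
        have h2 : ∀ k : Fin r,
            pth x (pth (c 0) fun j => c j.succ) (k.succ.castSucc) =
              pth (c 0) (fun j => c j.succ) k.castSucc := by
          intro k
          rw [← Fin.succ_castSucc, pth_succ]
        have h3 : ∀ k : Fin r,
            pth x (pth (c 0) fun j => c j.succ) (k.succ.succ) =
              pth (c 0) (fun j => c j.succ) k.succ := by
          intro k
          rw [pth_succ]
        simp_rw [h2, h3]
        rw [mul_ite, mul_zero]
        simp [Fin.val_succ, pth, Fin.tail_cons]

lemma trace_listProd (m : ℕ) (M : ℕ → Matrix (Fin n) (Fin n) ℂ) :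
    (((List.range (m+1)).map M).prod).trace =
      ∑ c : Fin (m+1) → Fin n, ∏ k : Fin (m+1), M k (c k) (c (k + 1)) := by
  rw [Matrix.trace]
  simp only [Matrix.diag_apply]
  simp_rw [listProd_entry]
  rw [Finset.sum_comm]
  have hlast : ∀ (x : Fin n) (c : Fin (m+1) → Fin n),
      pth x c (Fin.last (m+1)) = c (Fin.last m) := by
    intro x c; rw [← Fin.succ_last, pth_succ]
  simp_rw [hlast]
  have hsum : ∀ c : Fin (m+1) → Fin n,
      (∑ x : Fin n, if c (Fin.last m) = x then
          ∏ k : Fin (m+1), M k (pth x c k.castSucc) (pth x c k.succ) else 0)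
      = ∏ k : Fin (m+1), M k (c (k - 1)) (c k) := by
    intro c
    rw [Finset.sum_ite_eq]
    simp only [Finset.mem_univ, if_true]
    exact Finset.prod_congr rfl fun k _ => by rw [pth_castSucc_last, pth_succ]
  simp_rw [hsum]
  rw [← Equiv.sum_comp (Equiv.arrowCongr (Equiv.addRight (1 : Fin (m+1))) (Equiv.refl (Fin n)))
    (fun d => ∏ k : Fin (m+1), M k (d k) (d (k+1)))]
  apply Finset.sum_congr rfl
  intro c _
  apply Finset.prod_congr rfl
  intro k _
  simp [Equiv.arrowCongr, add_sub_cancel_right, sub_eq_add_neg]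

lemma trace_listProd' (r : ℕ) [NeZero r] (M : ℕ → Matrix (Fin n) (Fin n) ℂ) :
    (((List.range r).map M).prod).trace =
      ∑ c : Fin r → Fin n, ∏ k : Fin r, M k (c k) (c (k + 1)) := by
  rcases Nat.exists_eq_succ_of_ne_zero (NeZero.ne r) with ⟨m, rfl⟩
  exact trace_listProd m M

end Paths


section Key

variable {p : ℕ} (bl : Fin n → Fin p) (A : Matrix (Fin n) (Fin n) ℂ) (σ : Equiv.Perm (Fin n))

lemma prod_ite_zero {ι : Type*} [Fintype ι] (P : ι → Prop) [DecidablePred P] (f : ι → ℂ) :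
    (∏ x : ι, if P x then f x else 0) = if (∀ x, P x) then ∏ x, f x else 0 := by
  by_cases h : ∀ x, P x
  · rw [if_pos h]; exact Finset.prod_congr rfl fun x _ => if_pos (h x)
  · rw [if_neg h]
    push_neg at h
    obtain ⟨x, hx⟩ := h
    exact Finset.prod_eq_zero (Finset.mem_univ x) (if_neg hx)

lemma cycleBlockTrace_eq (i : Fin n) :
    haveI : NeZero (Function.minimalPeriod ⇑σ i) := ⟨(mp_pos σ i).ne'⟩
    cycleBlockTrace bl A σ i =
      ∑ c : Fin (Function.minimalPeriod ⇑σ i) → Fin n,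
        ∏ k : Fin (Function.minimalPeriod ⇑σ i),
          if bl (c k) = bl ((σ ^ (k : ℕ)) i) ∧ bl (c (k + 1)) = bl ((σ ^ ((k : ℕ) + 1)) i)
          then A (c k) (c (k + 1)) else 0 := by
  haveI : NeZero (Function.minimalPeriod ⇑σ i) := ⟨(mp_pos σ i).ne'⟩
  rw [cycleBlockTrace, trace_listProd']
  apply Finset.sum_congr rfl
  intro c _
  apply Finset.prod_congr rfl
  intro k _
  rfl

/-- The bijection between functions `Fin n → Fin n` and families of paths indexed by
the cycles of `σ`. -/
noncomputable def pathsEquiv :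
    (Fin n → Fin n) ≃
      ((i : {i : Fin n // IsOrbitRep σ i}) → Fin (Function.minimalPeriod ⇑σ i.1) → Fin n) :=
  (Equiv.arrowCongr (orbEquiv σ) (Equiv.refl (Fin n))).symm.trans
    (Equiv.piCurry fun _ _ => Fin n)

@[simp] lemma pathsEquiv_apply (g : Fin n → Fin n) (i : {i : Fin n // IsOrbitRep σ i})
    (k : Fin (Function.minimalPeriod ⇑σ i.1)) :
    pathsEquiv σ g i k = g ((σ ^ (k : ℕ)) i.1) := rfl

lemma pow_fin_succ (i : Fin n) [NeZero (Function.minimalPeriod ⇑σ i)]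
    (k : Fin (Function.minimalPeriod ⇑σ i)) :
    (σ ^ (((k + 1 : Fin (Function.minimalPeriod ⇑σ i))) : ℕ)) i = (σ ^ ((k : ℕ) + 1)) i := by
  have hval : ((k + 1 : Fin (Function.minimalPeriod ⇑σ i)) : ℕ)
      = ((k : ℕ) + 1) % Function.minimalPeriod ⇑σ i := by
    rw [Fin.val_add, Fin.val_one']
    conv_rhs => rw [Nat.add_mod, Nat.mod_eq_of_lt k.2]
  rw [hval, pow_mod_mp]

lemma prod_cycleBlockTrace :
    (∏ i ∈ cycleReps σ, cycleBlockTrace bl A σ i) =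
      ∑ g : Fin n → Fin n,
        if (∀ x, bl (g x) = bl x) then ∏ x, A (g x) (g (σ x)) else 0 := by
  classical
  haveI : ∀ i : Fin n, NeZero (Function.minimalPeriod ⇑σ i) := fun i => ⟨(mp_pos σ i).ne'⟩
  rw [show (cycleReps σ) = Finset.univ.filter (IsOrbitRep σ) from rfl]
  rw [Finset.prod_subtype (p := IsOrbitRep σ) (Finset.univ.filter (IsOrbitRep σ))
    (fun i => by simp) (cycleBlockTrace bl A σ)]
  simp_rw [cycleBlockTrace_eq bl A σ]
  rw [Fintype.prod_sum]
  rw [← Equiv.sum_comp (pathsEquiv σ)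
    (fun F : (i : {i : Fin n // IsOrbitRep σ i}) →
        Fin (Function.minimalPeriod ⇑σ i.1) → Fin n =>
      ∏ i, ∏ k : Fin (Function.minimalPeriod ⇑σ i.1),
        if bl (F i k) = bl ((σ ^ (k : ℕ)) i.1) ∧
            bl (F i (k + 1)) = bl ((σ ^ ((k : ℕ) + 1)) i.1)
        then A (F i k) (F i (k + 1)) else 0)]
  apply Finset.sum_congr rfl
  intro g _
  simp only [pathsEquiv_apply]
  have hstep : ∀ (i : {i : Fin n // IsOrbitRep σ i})
      (k : Fin (Function.minimalPeriod ⇑σ i.1)),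
      g ((σ ^ (((k + 1 : Fin (Function.minimalPeriod ⇑σ i.1))) : ℕ)) i.1)
        = g ((σ ^ ((k : ℕ) + 1)) i.1) := fun i k => by rw [pow_fin_succ]
  simp_rw [hstep]
  have hfact : ∀ (i : {i : Fin n // IsOrbitRep σ i})
      (k : Fin (Function.minimalPeriod ⇑σ i.1)),
      (if bl (g ((σ ^ (k : ℕ)) i.1)) = bl ((σ ^ (k : ℕ)) i.1) ∧
          bl (g ((σ ^ ((k : ℕ) + 1)) i.1)) = bl ((σ ^ ((k : ℕ) + 1)) i.1)
        then A (g ((σ ^ (k : ℕ)) i.1)) (g ((σ ^ ((k : ℕ) + 1)) i.1)) else 0)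
      = (fun y => if bl (g y) = bl y ∧ bl (g (σ y)) = bl (σ y)
          then A (g y) (g (σ y)) else 0) ((σ ^ (k : ℕ)) i.1) := by
    intro i k
    have : (σ ^ ((k : ℕ) + 1)) i.1 = σ ((σ ^ (k : ℕ)) i.1) := by
      rw [pow_succ']; rfl
    rw [this]
  simp_rw [hfact]
  have key : (∏ x : Σ i : {i : Fin n // IsOrbitRep σ i}, Fin (Function.minimalPeriod ⇑σ i.1),
      (fun y => if bl (g y) = bl y ∧ bl (g (σ y)) = bl (σ y) then A (g y) (g (σ y)) else 0)
        ((σ ^ (x.2 : ℕ)) x.1.1))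
      = ∏ y : Fin n,
          (fun y => if bl (g y) = bl y ∧ bl (g (σ y)) = bl (σ y)
            then A (g y) (g (σ y)) else 0) y :=
    Equiv.prod_comp (orbEquiv σ)
      (fun y => if bl (g y) = bl y ∧ bl (g (σ y)) = bl (σ y) then A (g y) (g (σ y)) else 0)
  simp only at key
  rw [Finset.prod_sigma' Finset.univ (fun i => Finset.univ)
    (fun (i : {i : Fin n // IsOrbitRep σ i}) (k : Fin (Function.minimalPeriod ⇑σ i.1)) =>
      if bl (g ((σ ^ (k : ℕ)) i.1)) = bl ((σ ^ (k : ℕ)) i.1) ∧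
          bl (g (σ ((σ ^ (k : ℕ)) i.1))) = bl (σ ((σ ^ (k : ℕ)) i.1))
      then A (g ((σ ^ (k : ℕ)) i.1)) (g (σ ((σ ^ (k : ℕ)) i.1))) else 0)]
  rw [Finset.univ_sigma_univ]
  rw [key]
  rw [prod_ite_zero]
  congr 1
  · apply propext
    constructor
    · intro h x; exact (h x).1
    · intro h x; exact ⟨h x, h (σ x)⟩

lemma sum_sign_prod_bijective (g : Fin n → Fin n) (hg : Function.Bijective g) :
    (∑ σ : Equiv.Perm (Fin n), ((Equiv.Perm.sign σ : ℤ) : ℂ) * ∏ x, A (g x) (g (σ x)))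
      = A.det := by
  let e : Fin n ≃ Fin n := Equiv.ofBijective g hg
  have step : ∀ σ : Equiv.Perm (Fin n),
      ((Equiv.Perm.sign σ : ℤ) : ℂ) * ∏ x, A (g x) (g (σ x))
        = ((Equiv.Perm.sign (e.permCongr σ) : ℤ) : ℂ) * ∏ x, A x ((e.permCongr σ) x) := by
    intro σ
    have hsign : Equiv.Perm.sign (e.permCongr σ) = Equiv.Perm.sign σ := by
      rw [Equiv.permCongr_def]
      exact Equiv.Perm.sign_symm_trans_trans σ e
    rw [hsign]
    congr 1
    rw [← Equiv.prod_comp e (fun x => A x ((e.permCongr σ) x))]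
    apply Finset.prod_congr rfl
    intro y _
    simp only [Equiv.permCongr_apply, Equiv.symm_apply_apply]
    rfl
  simp_rw [step]
  rw [Equiv.sum_comp (Equiv.permCongr e)
    (fun τ : Equiv.Perm (Fin n) => ((Equiv.Perm.sign τ : ℤ) : ℂ) * ∏ x, A x (τ x))]
  rw [← Matrix.det_transpose A, Matrix.det_apply']
  apply Finset.sum_congr rfl
  intro τ _
  rfl

lemma sum_sign_prod_not_injective (g : Fin n → Fin n) (hg : ¬ Function.Injective g) :
    (∑ σ : Equiv.Perm (Fin n), ((Equiv.Perm.sign σ : ℤ) : ℂ) * ∏ x, A (g x) (g (σ x)))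
      = 0 := by
  simp only [Function.Injective, not_forall] at hg
  obtain ⟨a, b, hab, hne⟩ := hg
  have hgs : ∀ x, g (Equiv.swap a b x) = g x := by
    intro x
    rcases eq_or_ne x a with rfl | hxa
    · rw [Equiv.swap_apply_left]; exact hab.symm
    rcases eq_or_ne x b with rfl | hxb
    · rw [Equiv.swap_apply_right]; exact hab
    · rw [Equiv.swap_apply_of_ne_of_ne hxa hxb]
  apply Finset.sum_ninvolution (fun σ => σ * Equiv.swap a b)
  · intro σ
    have hprod : (∏ x, A (g x) (g ((σ * Equiv.swap a b) x))) = ∏ x, A (g x) (g (σ x)) := by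
      have : ∀ x, (σ * Equiv.swap a b) x = σ (Equiv.swap a b x) := fun x => rfl
      simp_rw [this]
      rw [← Equiv.prod_comp (Equiv.swap a b)
        (fun x => A (g x) (g (σ (Equiv.swap a b x))))]
      apply Finset.prod_congr rfl
      intro x _
      simp only [Equiv.swap_apply_self, hgs]
    rw [hprod]
    have hsign : Equiv.Perm.sign (σ * Equiv.swap a b) = - Equiv.Perm.sign σ := by
      rw [Equiv.Perm.sign_mul, Equiv.Perm.sign_swap hne, mul_neg_one]
    rw [hsign]
    push_cast
    ring
  · intro σ _
    intro h
    have : Equiv.swap a b = 1 := by rwa [mul_eq_left] at h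
    have hba : Equiv.swap a b a = a := by rw [this]; rfl
    rw [Equiv.swap_apply_left] at hba
    exact hne hba.symm
  · intro σ; exact Finset.mem_univ _
  · intro σ
    rw [mul_assoc, Equiv.swap_mul_self, mul_one]

variable (p) in
/-- Gluing a family of fiberwise permutations into a self-map of `Fin n`. -/
def glue (bl : Fin n → Fin p) (F : (a : Fin p) → Equiv.Perm {i : Fin n // bl i = a}) :
    Fin n → Fin n := fun x => (F (bl x) ⟨x, rfl⟩).1

lemma glue_aux (bl : Fin n → Fin p) (F : (a : Fin p) → Equiv.Perm {i : Fin n // bl i = a})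
    (a : Fin p) (v : Fin n) (hv : bl v = a) : ((F a) ⟨v, hv⟩).1 = glue p bl F v := by
  subst hv; rfl

lemma glue_bl (bl : Fin n → Fin p) (F : (a : Fin p) → Equiv.Perm {i : Fin n // bl i = a})
    (x : Fin n) : bl (glue p bl F x) = bl x := (F (bl x) ⟨x, rfl⟩).2

lemma glue_injective (bl : Fin n → Fin p)
    (F : (a : Fin p) → Equiv.Perm {i : Fin n // bl i = a}) :
    Function.Injective (glue p bl F) := by
  intro x y h
  have hb : bl x = bl y := by
    rw [← glue_bl bl F x, ← glue_bl bl F y, h]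
  have h1 : ((F (bl x)) ⟨x, rfl⟩).1 = ((F (bl x)) ⟨y, hb.symm⟩).1 := by
    rw [glue_aux bl F (bl x) x rfl, glue_aux bl F (bl x) y hb.symm, h]
  have h2 : (⟨x, rfl⟩ : {i : Fin n // bl i = bl x}) = ⟨y, hb.symm⟩ :=
    (F (bl x)).injective (Subtype.ext h1)
  exact congrArg Subtype.val h2

lemma glue_map_injective (bl : Fin n → Fin p) :
    Function.Injective (glue p bl) := by
  intro F F' h
  funext a
  apply Equiv.ext
  rintro ⟨v, hv⟩
  subst hv
  apply Subtype.ext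
  have h1 := congrFun h v
  simpa [glue] using h1

lemma glue_surj (bl : Fin n → Fin p) (g : Fin n → Fin n) (hbl : ∀ x, bl (g x) = bl x)
    (hg : Function.Bijective g) : ∃ F, glue p bl F = g := by
  have hres : ∀ a : Fin p, Function.Bijective
      (fun x : {i : Fin n // bl i = a} => (⟨g x.1, by rw [hbl x.1, x.2]⟩ : {i : Fin n // bl i = a})) := by
    intro a
    rw [← Finite.injective_iff_bijective]
    intro u v huv
    exact Subtype.ext (hg.1 (congrArg Subtype.val huv))
  refine ⟨fun a => Equiv.ofBijective _ (hres a), ?_⟩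
  funext x
  rfl

lemma count_blockPerms (bl : Fin n → Fin p) (nv : Fin p → ℕ)
    (hcard : ∀ a, (Finset.univ.filter fun i => bl i = a).card = nv a) :
    (Finset.univ.filter fun g : Fin n → Fin n =>
        (∀ x, bl (g x) = bl x) ∧ Function.Bijective g).card
      = ∏ a, (nv a).factorial := by
  classical
  have himg : (Finset.univ.filter fun g : Fin n → Fin n =>
      (∀ x, bl (g x) = bl x) ∧ Function.Bijective g)
      = Finset.image (glue p bl) Finset.univ := by
    ext g
    simp only [Finset.mem_filter, Finset.mem_univ, true_and, Finset.mem_image]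
    constructor
    · rintro ⟨h1, h2⟩
      obtain ⟨F, hF⟩ := glue_surj bl g h1 h2
      exact ⟨F, hF⟩
    · rintro ⟨F, -, rfl⟩
      exact ⟨glue_bl bl F, (Finite.injective_iff_bijective).1 (glue_injective bl F)⟩
  rw [himg, Finset.card_image_of_injective _ (glue_map_injective bl), Finset.card_univ]
  rw [Fintype.card_pi]
  apply Finset.prod_congr rfl
  intro a _
  rw [Fintype.card_perm, Fintype.card_subtype, hcard]

end Key

end BlockDet


open BlockDet

/-- Determinant of a complex block matrix as a signed sum over
permutations of products, over the cycles of each permutation, of traces of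
products of blocks along the cycle. The partition of `{1,…,n}` into consecutive
intervals `I₁,…,I_p` with `|I_a| = n_a` is encoded by the monotone map
`bl : Fin n → Fin p` whose fibers have cardinalities `nv a`. -/
theorem det_blockMatrix_eq_inv_factorials_sum_sign_prod_blockTraces
    (p : ℕ) (hp : 1 ≤ p) (nv : Fin p → ℕ) (hnv : ∀ a, 1 ≤ nv a)
    (n : ℕ) (hn : n = ∑ a, nv a)
    (bl : Fin n → Fin p) (hbl : Monotone bl)
    (hcard : ∀ a, (Finset.univ.filter fun i => bl i = a).card = nv a)
    (A : Matrix (Fin n) (Fin n) ℂ) :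
    A.det = (1 / ∏ a, ((nv a).factorial : ℂ)) *
      ∑ σ : Equiv.Perm (Fin n),
        ((Equiv.Perm.sign σ : ℤ) : ℂ) *
          ∏ i ∈ cycleReps σ, cycleBlockTrace bl A σ i := by

  classical
  have h1 : (∑ σ : Equiv.Perm (Fin n),
      ((Equiv.Perm.sign σ : ℤ) : ℂ) * ∏ i ∈ cycleReps σ, cycleBlockTrace bl A σ i)
      = (∏ a, ((nv a).factorial : ℂ)) * A.det := by
    simp_rw [prod_cycleBlockTrace bl A]
    have hmul : ∀ (σ : Equiv.Perm (Fin n)) (g : Fin n → Fin n),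
        ((Equiv.Perm.sign σ : ℤ) : ℂ) *
            (if (∀ x, bl (g x) = bl x) then ∏ x, A (g x) (g (σ x)) else 0)
          = if (∀ x, bl (g x) = bl x)
              then ((Equiv.Perm.sign σ : ℤ) : ℂ) * ∏ x, A (g x) (g (σ x)) else 0 := by
      intro σ g; split_ifs <;> simp
    simp_rw [Finset.mul_sum, hmul]
    rw [Finset.sum_comm]
    have h2 : ∀ g : Fin n → Fin n,
        (∑ σ : Equiv.Perm (Fin n),
          if (∀ x, bl (g x) = bl x)
            then ((Equiv.Perm.sign σ : ℤ) : ℂ) * ∏ x, A (g x) (g (σ x)) else 0)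
        = if ((∀ x, bl (g x) = bl x) ∧ Function.Bijective g) then A.det else 0 := by
      intro g
      by_cases hb : ∀ x, bl (g x) = bl x
      · simp only [if_pos hb]
        by_cases hbij : Function.Bijective g
        · rw [if_pos ⟨hb, hbij⟩]
          exact sum_sign_prod_bijective A g hbij
        · rw [if_neg fun h => hbij h.2]
          exact sum_sign_prod_not_injective A g
            (fun hinj => hbij ((Finite.injective_iff_bijective).1 hinj))
      · simp only [if_neg hb, Finset.sum_const_zero]
        rw [if_neg fun h => hb h.1]
    simp_rw [h2]
    rw [Finset.sum_ite, Finset.sum_const, Finset.sum_const_zero, add_zero]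
    have hcount := count_blockPerms bl nv hcard
    rw [show (Finset.univ.filter fun g : Fin n → Fin n =>
        (∀ x, bl (g x) = bl x) ∧ Function.Bijective g).card = ∏ a, (nv a).factorial
      from hcount]
    rw [nsmul_eq_mul, Nat.cast_prod]
  have hc : (∏ a, ((nv a).factorial : ℂ)) ≠ 0 := by
    apply Finset.prod_ne_zero_iff.2
    intro a _
    exact Nat.cast_ne_zero.2 (Nat.factorial_ne_zero _)
  rw [h1, ← mul_assoc, one_div, inv_mul_cancel₀ hc, one_mul]
end

section
/- Let R be a commutative ring and let A be an n×n matrix over R with the given block structure. Then n_1!⋯n_p! · det A = Σ_{σ ∈ S_n} ε(σ) · ∏_{(i_1 ⋯ i_r) ≼ σ} Tr( A_{[bl(i_1) bl(i_2)]} A_{[bl(i_2) bl(i_3)]} ⋯ A_{[bl(i_r) bl(i_1)]} ), where the product runs over all cycles of σ (fixed points counting as cycles of length 1). -/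
open Matrix

namespace BlockDetAux

variable {R : Type*} [CommRing R] {n : ℕ}

def pathSum (M : ℕ → Matrix (Fin n) (Fin n) R) : ℕ → Fin n → Fin n → R
  | 0, u, v => if u = v then 1 else 0
  | (m+1), u, v => ∑ w, pathSum M m u w * M m w v

lemma listProd_apply (M : ℕ → Matrix (Fin n) (Fin n) R) (m : ℕ) (u : Fin n) :
    ∀ v, (((List.range m).map M).prod) u v = pathSum M m u v := by
  induction m with
  | zero => intro v; simp [pathSum, Matrix.one_apply]
  | succ m ih =>
    intro v
    rw [List.range_succ, List.map_append, List.prod_append]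
    simp [Matrix.mul_apply, pathSum, ih]

def snocE (m : ℕ) : ((Fin (m+1) → Fin n) × Fin n) ≃ (Fin (m+2) → Fin n) where
  toFun x := Fin.snoc x.1 x.2
  invFun x := (fun k => x k.castSucc, x (Fin.last _))
  left_inv x := by simp
  right_inv x := by
    funext k
    induction k using Fin.lastCases <;> simp

lemma pathSum_succ_eq (M : ℕ → Matrix (Fin n) (Fin n) R) (m : ℕ) (u : Fin n) :
    ∀ v, pathSum M (m+1) u v = ∑ x : Fin (m+1) → Fin n,
      if x 0 = u then
        ∏ k : Fin (m+1), M k (x k)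
          (if h : (k : ℕ) + 1 < m + 1 then x ⟨(k : ℕ) + 1, h⟩ else v)
      else 0 := by
  induction m with
  | zero =>
    intro v
    rw [← (Equiv.funUnique (Fin 1) (Fin n)).symm.sum_comp]
    simp [pathSum, Equiv.funUnique, mul_comm]
  | succ m ih =>
    intro v
    rw [show pathSum M (m+2) u v = ∑ w, pathSum M (m+1) u w * M (m+1) w v from rfl]
    rw [← (snocE m).sum_comp, Fintype.sum_prod_type, Finset.sum_comm]
    refine Finset.sum_congr rfl fun w _ => ?_
    rw [ih w, Finset.sum_mul]
    refine Finset.sum_congr rfl fun x _ => ?_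
    rw [ite_mul, zero_mul]
    have h0 : (snocE m (x, w)) 0 = x 0 := by
      show (Fin.snoc x w : Fin (m+2) → Fin n) 0 = x 0
      rw [show (0 : Fin (m+2)) = Fin.castSucc 0 from rfl, Fin.snoc_castSucc]
    rw [h0]
    by_cases hx : x 0 = u
    · rw [if_pos hx, if_pos hx]
      rw [Fin.prod_univ_castSucc (n := m+1)]
      congr 1
      · refine Finset.prod_congr rfl fun j _ => ?_
        have h1 : ((snocE m (x, w)) j.castSucc) = x j := by
          show (Fin.snoc x w : Fin (m+2) → Fin n) j.castSucc = x j
          rw [Fin.snoc_castSucc]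
        have hco : ((j.castSucc : Fin (m+2)) : ℕ) = (j : ℕ) := rfl
        rw [h1, hco]
        congr 1
        have hlt : (j : ℕ) + 1 < m + 2 := by omega
        rw [dif_pos hlt]
        by_cases h2 : (j : ℕ) + 1 < m + 1
        · rw [dif_pos h2]
          show _ = (Fin.snoc x w : Fin (m+2) → Fin n) _
          rw [show (⟨(j:ℕ)+1, hlt⟩ : Fin (m+2)) = Fin.castSucc ⟨(j:ℕ)+1, h2⟩ from rfl,
            Fin.snoc_castSucc]
        · rw [dif_neg h2]
          have : (⟨(j:ℕ)+1, hlt⟩ : Fin (m+2)) = Fin.last (m+1) := by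
            apply Fin.ext; simp; omega
          rw [this]
          show _ = (Fin.snoc x w : Fin (m+2) → Fin n) _
          rw [Fin.snoc_last]
      · have hlast : ((Fin.last (m+1) : Fin (m+2)) : ℕ) = m + 1 := rfl
        have h3 : (snocE m (x, w)) (Fin.last (m+1)) = w := by
          show (Fin.snoc x w : Fin (m+2) → Fin n) _ = w
          rw [Fin.snoc_last]
        rw [h3, hlast, dif_neg (by omega)]
    · rw [if_neg hx, if_neg hx]


lemma trace_listProd (M : ℕ → Matrix (Fin n) (Fin n) R) (r : ℕ) (hr : 0 < r) :
    (((List.range r).map M).prod).trace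
      = ∑ x : Fin r → Fin n, ∏ k : Fin r,
          M k (x k) (x ⟨((k : ℕ) + 1) % r, Nat.mod_lt _ hr⟩) := by
  obtain ⟨m, rfl⟩ : ∃ m, r = m + 1 := ⟨r - 1, by omega⟩
  rw [Matrix.trace]
  simp only [Matrix.diag]
  have : ∀ u, (((List.range (m+1)).map M).prod) u u = pathSum M (m+1) u u :=
    fun u => listProd_apply M (m+1) u u
  simp only [this, pathSum_succ_eq]
  rw [Finset.sum_comm]
  refine Finset.sum_congr rfl fun x _ => ?_
  rw [Finset.sum_ite_eq (Finset.univ) (x 0)]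
  rw [if_pos (Finset.mem_univ _)]
  refine Finset.prod_congr rfl fun k _ => ?_
  congr 1
  by_cases h : (k : ℕ) + 1 < m + 1
  · rw [dif_pos h]
    congr 1
    exact Fin.ext (by simp [Nat.mod_eq_of_lt h])
  · rw [dif_neg h]
    have hk : (k : ℕ) + 1 = m + 1 := by omega
    have : (⟨((k:ℕ)+1) % (m+1), Nat.mod_lt _ hr⟩ : Fin (m+1)) = 0 := by
      apply Fin.ext; simp [hk]
    rw [this]


/-- block preserving functions on `s`, identity off `s`. -/
def GS (bl : Fin n → Fin p) (s : Finset (Fin n)) : Finset (Fin n → Fin n) :=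
  Finset.univ.filter fun g => (∀ x ∈ s, bl (g x) = bl x) ∧ ∀ x, x ∉ s → g x = x

lemma mem_GS {bl : Fin n → Fin p} {s : Finset (Fin n)} {g : Fin n → Fin n} :
    g ∈ GS bl s ↔ (∀ x ∈ s, bl (g x) = bl x) ∧ ∀ x, x ∉ s → g x = x := by
  simp [GS]

section orb
variable (σ : Equiv.Perm (Fin n)) (x₀ : Fin n)

lemma per_pos : 0 < Function.minimalPeriod (⇑σ) x₀ := by
  apply Function.IsPeriodicPt.minimalPeriod_pos (orderOf_pos σ)
  show (⇑σ)^[orderOf σ] x₀ = x₀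
  rw [Equiv.Perm.iterate_eq_pow, pow_orderOf_eq_one]; rfl

lemma pow_mod_apply (k : ℕ) :
    (σ ^ (k % Function.minimalPeriod (⇑σ) x₀)) x₀ = (σ ^ k) x₀ := by
  exact Function.iterate_mod_minimalPeriod_eq (f := ⇑σ) (x := x₀) (n := k)

noncomputable def orb : Finset (Fin n) :=
  (Finset.range (Function.minimalPeriod (⇑σ) x₀)).image fun k => (σ ^ k) x₀

lemma mem_orb_iff {y : Fin n} : y ∈ orb σ x₀ ↔
    ∃ k < Function.minimalPeriod (⇑σ) x₀, (σ ^ k) x₀ = y := by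
  simp [orb]

lemma pow_mem_orb (k : ℕ) : (σ ^ k) x₀ ∈ orb σ x₀ := by
  rw [mem_orb_iff]
  exact ⟨k % _, Nat.mod_lt _ (per_pos σ x₀), pow_mod_apply σ x₀ k⟩

lemma x₀_mem_orb : x₀ ∈ orb σ x₀ := by
  simpa using pow_mem_orb σ x₀ 0

lemma pow_succ_apply (k : ℕ) : (σ ^ (k+1)) x₀ = σ ((σ ^ k) x₀) := by
  rw [pow_succ', Equiv.Perm.mul_apply]

lemma orb_inv {y : Fin n} (hy : y ∈ orb σ x₀) : σ y ∈ orb σ x₀ := by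
  rw [mem_orb_iff] at hy
  obtain ⟨k, -, rfl⟩ := hy
  rw [← pow_succ_apply]
  exact pow_mem_orb σ x₀ _

lemma pow_per_apply : (σ ^ Function.minimalPeriod (⇑σ) x₀) x₀ = x₀ := by
  exact Function.iterate_minimalPeriod (f := ⇑σ) (x := x₀)

lemma orb_inv' {y : Fin n} (hy : σ y ∈ orb σ x₀) : y ∈ orb σ x₀ := by
  rw [mem_orb_iff] at hy
  obtain ⟨k, hk, hky⟩ := hy
  match k, hky with
  | 0, hky =>
    have : σ ((σ ^ (Function.minimalPeriod (⇑σ) x₀ - 1)) x₀) = σ y := by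
      rw [← pow_succ_apply, Nat.sub_add_cancel (per_pos σ x₀), pow_per_apply]
      simpa using hky
    have := σ.injective this
    rw [← this]; exact pow_mem_orb σ x₀ _
  | (k+1), hky =>
    rw [pow_succ_apply] at hky
    have := σ.injective hky
    rw [← this]; exact pow_mem_orb σ x₀ _

lemma injOn_pow : Set.InjOn (fun k => (σ ^ k) x₀)
    (Set.Iio (Function.minimalPeriod (⇑σ) x₀)) := by
  have := Function.iterate_injOn_Iio_minimalPeriod (f := ⇑σ) (x := x₀)
  simp only [Equiv.Perm.iterate_eq_pow] at this; exact this

lemma card_orb : (orb σ x₀).card = Function.minimalPeriod (⇑σ) x₀ := by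
  rw [orb, Finset.card_image_of_injOn, Finset.card_range]
  intro a ha b hb hab
  exact injOn_pow σ x₀ (by simpa using ha) (by simpa using hb) hab

lemma per_le : Function.minimalPeriod (⇑σ) x₀ ≤ n := by
  rw [← card_orb σ x₀]
  simpa using Finset.card_le_card (Finset.subset_univ (orb σ x₀))

end orb

lemma trace_orbit (bl : Fin n → Fin p) (A : Matrix (Fin n) (Fin n) R)
    (σ : Equiv.Perm (Fin n)) (x₀ : Fin n) :
    cycleBlockTrace bl A σ x₀
      = ∑ g ∈ GS bl (orb σ x₀), ∏ x ∈ orb σ x₀, A (g x) (g (σ x)) := by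
  classical
  have hr : 0 < Function.minimalPeriod (⇑σ) x₀ := per_pos σ x₀
  set r := Function.minimalPeriod (⇑σ) x₀ with hrdef
  rw [cycleBlockTrace, trace_listProd _ r hr]
  have step1 : ∀ x : Fin r → Fin n,
      (∏ k : Fin r, blockPad bl A (bl ((σ ^ (k:ℕ)) x₀)) (bl ((σ ^ ((k:ℕ)+1)) x₀)) (x k)
          (x ⟨((k:ℕ)+1) % r, Nat.mod_lt _ hr⟩))
      = if (∀ k : Fin r, bl (x k) = bl ((σ ^ (k:ℕ)) x₀)) then
          ∏ k : Fin r, A (x k) (x ⟨((k:ℕ)+1) % r, Nat.mod_lt _ hr⟩) else 0 := by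
    intro x
    by_cases hx : ∀ k : Fin r, bl (x k) = bl ((σ ^ (k:ℕ)) x₀)
    · rw [if_pos hx]
      refine Finset.prod_congr rfl fun k _ => ?_
      show (if _ ∧ _ then _ else _) = _
      rw [if_pos]
      refine ⟨hx k, ?_⟩
      rw [hx ⟨((k:ℕ)+1) % r, Nat.mod_lt _ hr⟩]
      congr 1
      exact pow_mod_apply σ x₀ ((k:ℕ)+1)
    · rw [if_neg hx]
      push_neg at hx
      obtain ⟨k, hk⟩ := hx
      apply Finset.prod_eq_zero (Finset.mem_univ k)
      show (if _ ∧ _ then _ else _) = 0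
      rw [if_neg]; rintro ⟨h1, -⟩; exact hk h1
  simp only [step1]
  rw [← Finset.sum_filter]
  have hux : ∀ y ∈ orb σ x₀, ∃! k, k ∈ Finset.range r ∧ (σ ^ k) x₀ = y := by
    intro y hy
    obtain ⟨k, hk, hky⟩ := (mem_orb_iff σ x₀).mp hy
    refine ⟨k, ⟨Finset.mem_range.mpr hk, hky⟩, ?_⟩
    rintro k' ⟨hk', hky'⟩
    exact injOn_pow σ x₀ (Finset.mem_range.mp hk') hk (hky'.trans hky.symm)
  refine (Finset.sum_bij (i := fun g _ => fun k : Fin r => g ((σ ^ (k:ℕ)) x₀))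
    ?_ ?_ ?_ ?_).symm
  · intro g hg
    rw [Finset.mem_filter]
    refine ⟨Finset.mem_univ _, fun k => ?_⟩
    exact (mem_GS.mp hg).1 _ (pow_mem_orb σ x₀ _)
  · intro g₁ hg₁ g₂ hg₂ h
    funext y
    by_cases hy : y ∈ orb σ x₀
    · obtain ⟨k, hk, rfl⟩ := (mem_orb_iff σ x₀).mp hy
      exact congrFun h ⟨k, hk⟩
    · rw [(mem_GS.mp hg₁).2 y hy, (mem_GS.mp hg₂).2 y hy]
  · intro x hx
    rw [Finset.mem_filter] at hx
    refine ⟨fun y => if h : y ∈ orb σ x₀ then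
        x ⟨Finset.choose _ _ (hux y h),
          Finset.mem_range.mp (Finset.choose_mem _ _ (hux y h))⟩ else y, ?_, ?_⟩
    · rw [mem_GS]
      constructor
      · intro y hy
        rw [dif_pos hy]
        rw [hx.2 ⟨Finset.choose _ _ (hux y hy), _⟩]
        have := (Finset.choose_property _ _ (hux y hy) : (σ ^ _) x₀ = y)
        rw [this]
      · intro y hy; rw [dif_neg hy]
    · funext k
      have hk : (σ ^ (k:ℕ)) x₀ ∈ orb σ x₀ := pow_mem_orb σ x₀ _
      beta_reduce
      rw [dif_pos hk]
      have hprop := (Finset.choose_property _ _ (hux _ hk) : (σ ^ _) x₀ = (σ ^ (k:ℕ)) x₀)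
      have hmem := Finset.mem_range.mp (Finset.choose_mem _ _ (hux _ hk))
      have : Finset.choose _ _ (hux _ hk) = (k : ℕ) := injOn_pow σ x₀ hmem k.isLt hprop
      congr 1
      exact Fin.ext this
  · intro g hg
    have hinj : Set.InjOn (fun k => (σ ^ k) x₀) ↑(Finset.range r) := by
      intro a ha b hb hab
      exact injOn_pow σ x₀ (by simpa using ha) (by simpa using hb) hab
    beta_reduce
    rw [show orb σ x₀ = (Finset.range r).image fun k => (σ ^ k) x₀ from rfl,
      Finset.prod_image (fun a ha b hb => hinj ha hb)]
    rw [← Fin.prod_univ_eq_prod_range (fun k => A (g ((σ ^ k) x₀)) (g (σ ((σ ^ k) x₀))))]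
    refine Finset.prod_congr rfl fun k _ => ?_
    congr 1
    rw [← pow_succ_apply, ← pow_mod_apply σ x₀ ((k:ℕ)+1)]


lemma GS_sum_split (bl : Fin n → Fin p) (A : Matrix (Fin n) (Fin n) R)
    (σ : Equiv.Perm (Fin n)) (s O : Finset (Fin n)) (hOs : O ⊆ s)
    (hOinv : ∀ x ∈ O, σ x ∈ O) (hOinv' : ∀ x, σ x ∈ O → x ∈ O) :
    (∑ g ∈ GS bl O, ∏ x ∈ O, A (g x) (g (σ x))) *
      (∑ g ∈ GS bl (s \ O), ∏ x ∈ s \ O, A (g x) (g (σ x)))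
    = ∑ g ∈ GS bl s, ∏ x ∈ s, A (g x) (g (σ x)) := by
  classical
  rw [Finset.sum_mul_sum, ← Finset.sum_product']
  refine Finset.sum_bij (i := fun gp _ => fun x => if x ∈ O then gp.1 x else gp.2 x)
    ?_ ?_ ?_ ?_
  · rintro ⟨g₁, g₂⟩ hgp
    rw [Finset.mem_product] at hgp
    obtain ⟨h₁, h₂⟩ := hgp
    rw [mem_GS] at h₁ h₂ ⊢
    dsimp only at h₁ h₂ ⊢
    constructor
    · intro x hx
      by_cases hO : x ∈ O
      · rw [if_pos hO]; exact h₁.1 x hO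
      · rw [if_neg hO]; exact h₂.1 x (Finset.mem_sdiff.mpr ⟨hx, hO⟩)
    · intro x hx
      have hO : x ∉ O := fun h => hx (hOs h)
      rw [if_neg hO]
      exact h₂.2 x (fun h => hx (Finset.mem_sdiff.mp h).1)
  · rintro ⟨g₁, g₂⟩ hgp ⟨g₁', g₂'⟩ hgp' h
    rw [Finset.mem_product] at hgp hgp'
    have h' := fun x => congrFun h x
    dsimp only at h'
    have hg1 := mem_GS.mp hgp.1
    have hg2 := mem_GS.mp hgp.2
    have hg1' := mem_GS.mp hgp'.1
    have hg2' := mem_GS.mp hgp'.2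
    dsimp only at hg1 hg2 hg1' hg2'
    ext x
    all_goals dsimp only
    · by_cases hO : x ∈ O
      · have := h' x; rw [if_pos hO, if_pos hO] at this; exact congrArg Fin.val this
      · rw [hg1.2 x hO, hg1'.2 x hO]
    · by_cases hO : x ∈ O
      · have hx : x ∉ s \ O := fun h => (Finset.mem_sdiff.mp h).2 hO
        rw [hg2.2 x hx, hg2'.2 x hx]
      · have := h' x; rw [if_neg hO, if_neg hO] at this; exact congrArg Fin.val this
  · intro g hg
    rw [mem_GS] at hg
    refine ⟨(fun x => if x ∈ O then g x else x, fun x => if x ∈ O then x else g x),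
      ?_, ?_⟩
    · rw [Finset.mem_product]
      constructor
      · rw [mem_GS]
        refine ⟨fun x hx => ?_, fun x hx => ?_⟩ <;> dsimp only
        · rw [if_pos hx]; exact hg.1 x (hOs hx)
        · rw [if_neg hx]
      · rw [mem_GS]
        refine ⟨fun x hx => ?_, fun x hx => ?_⟩ <;> dsimp only
        · obtain ⟨hxs, hxO⟩ := Finset.mem_sdiff.mp hx
          rw [if_neg hxO]; exact hg.1 x hxs
        · by_cases hO : x ∈ O
          · rw [if_pos hO]
          · rw [if_neg hO]
            exact hg.2 x (fun h => hx (Finset.mem_sdiff.mpr ⟨h, hO⟩))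
    · funext x
      by_cases hO : x ∈ O
      · simp only [if_pos hO]
      · simp only [if_neg hO]
  · rintro ⟨g₁, g₂⟩ hgp
    rw [Finset.mem_product] at hgp
    beta_reduce
    conv_rhs => rw [← Finset.union_sdiff_of_subset hOs]
    rw [Finset.prod_union (Finset.disjoint_sdiff)]
    congr 1
    · refine Finset.prod_congr rfl fun x hx => ?_
      rw [if_pos hx, if_pos (hOinv x hx)]
    · refine Finset.prod_congr rfl fun x hx => ?_
      obtain ⟨hxs, hxO⟩ := Finset.mem_sdiff.mp hx
      have : σ x ∉ O := fun h => hxO (hOinv' x h)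
      rw [if_neg hxO, if_neg this]

lemma prod_traces_eq (bl : Fin n → Fin p) (A : Matrix (Fin n) (Fin n) R)
    (σ : Equiv.Perm (Fin n)) (s : Finset (Fin n)) :
    (∀ x ∈ s, σ x ∈ s) →
      (∏ i ∈ (cycleReps σ).filter (· ∈ s), cycleBlockTrace bl A σ i)
        = ∑ g ∈ GS bl s, ∏ x ∈ s, A (g x) (g (σ x)) := by
  classical
  induction s using Finset.strongInduction with
  | _ s ih =>
  intro hs
  rcases s.eq_empty_or_nonempty with rfl | hne
  · have hGS : GS bl (∅ : Finset (Fin n)) = {id} := by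
      ext g
      rw [mem_GS]
      simp [funext_iff, id]
    simp [hGS]
  · set x₀ := s.min' hne with hx₀def
    have hx₀s : x₀ ∈ s := s.min'_mem hne
    have hOs : orb σ x₀ ⊆ s := by
      intro y hy
      obtain ⟨k, -, rfl⟩ := (mem_orb_iff σ x₀).mp hy
      clear hy
      induction k with
      | zero => simpa using hx₀s
      | succ k ihk => rw [pow_succ_apply]; exact hs _ ihk
    have hrep : x₀ ∈ cycleReps σ := by
      rw [cycleReps, Finset.mem_filter]
      exact ⟨Finset.mem_univ _, fun k _ => s.min'_le _ (hOs (pow_mem_orb σ x₀ k))⟩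
    have huniq : ∀ y ∈ orb σ x₀, IsOrbitRep σ y → y = x₀ := by
      intro y hy hyrep
      obtain ⟨j, hj, rfl⟩ := (mem_orb_iff σ x₀).mp hy
      rcases Nat.eq_zero_or_pos j with rfl | hjpos
      · simp
      · refine le_antisymm ?_ (s.min'_le _ (hOs hy))
        have hle : (σ ^ j) x₀ ≤ (σ ^ (Function.minimalPeriod (⇑σ) x₀ - j)) ((σ ^ j) x₀) := by
          apply hyrep
          rw [Finset.mem_range]
          have := per_le σ x₀
          omega
        have : (σ ^ (Function.minimalPeriod (⇑σ) x₀ - j)) ((σ ^ j) x₀) = x₀ := by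
          rw [← Equiv.Perm.mul_apply, ← pow_add, Nat.sub_add_cancel (le_of_lt hj),
            pow_per_apply]
        rwa [this] at hle
    have hsplit : (cycleReps σ).filter (· ∈ s)
        = insert x₀ ((cycleReps σ).filter (· ∈ s \ orb σ x₀)) := by
      ext y
      simp only [Finset.mem_filter, Finset.mem_insert, Finset.mem_sdiff]
      constructor
      · rintro ⟨hyrep, hys⟩
        by_cases hyO : y ∈ orb σ x₀
        · left
          exact huniq y hyO (by simpa [cycleReps] using hyrep)
        · right; exact ⟨hyrep, hys, hyO⟩
      · rintro (rfl | ⟨hyrep, hys, -⟩)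
        · exact ⟨hrep, hx₀s⟩
        · exact ⟨hyrep, hys⟩
    have hx₀not : x₀ ∉ (cycleReps σ).filter (· ∈ s \ orb σ x₀) := by
      simp only [Finset.mem_filter, Finset.mem_sdiff]
      rintro ⟨-, -, h⟩
      exact h (x₀_mem_orb σ x₀)
    rw [hsplit, Finset.prod_insert hx₀not, trace_orbit bl A σ x₀]
    have hss : s \ orb σ x₀ ⊂ s :=
      Finset.sdiff_ssubset hOs ⟨x₀, x₀_mem_orb σ x₀⟩
    have hsinv : ∀ x ∈ s \ orb σ x₀, σ x ∈ s \ orb σ x₀ := by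
      intro x hx
      obtain ⟨hxs, hxO⟩ := Finset.mem_sdiff.mp hx
      exact Finset.mem_sdiff.mpr ⟨hs x hxs, fun h => hxO (orb_inv' σ x₀ h)⟩
    rw [ih _ hss hsinv]
    exact GS_sum_split bl A σ s (orb σ x₀) hOs (fun x hx => orb_inv σ x₀ hx)
      (fun x hx => orb_inv' σ x₀ hx)

lemma card_inj (bl : Fin n → Fin p) (nv : Fin p → ℕ)
    (hcard : ∀ a, (Finset.univ.filter fun i => bl i = a).card = nv a) :
    ((GS bl Finset.univ).filter fun g => Function.Injective g).card
      = ∏ a, (nv a).factorial := by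
  classical
  have key : ∀ (u : ∀ a : Fin p, Equiv.Perm {x : Fin n // bl x = a})
      (a : Fin p) (x : Fin n) (hx : bl x = a),
      ((u (bl x) ⟨x, rfl⟩ : {y : Fin n // bl y = bl x}) : Fin n)
        = ((u a ⟨x, hx⟩ : {y : Fin n // bl y = a}) : Fin n) := by
    intro u a x hx
    subst hx; rfl
  have hbl' : ∀ (u : ∀ a : Fin p, Equiv.Perm {x : Fin n // bl x = a}) (x : Fin n),
      bl ((u (bl x) ⟨x, rfl⟩ : {y : Fin n // bl y = bl x}) : Fin n) = bl x :=
    fun u x => (u (bl x) ⟨x, rfl⟩).2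
  have hcb : (Finset.univ : Finset (∀ a : Fin p, Equiv.Perm {x : Fin n // bl x = a})).card
      = ((GS bl Finset.univ).filter fun g => Function.Injective g).card := by
    refine Finset.card_bij
      (i := fun u _ => fun x : Fin n => ((u (bl x) ⟨x, rfl⟩ : {y // bl y = bl x}) : Fin n))
      ?_ ?_ ?_
    · intro u _
      rw [Finset.mem_filter, mem_GS]
      refine ⟨⟨fun x _ => hbl' u x, fun x hx => absurd (Finset.mem_univ x) hx⟩, ?_⟩
      intro x y hxy
      dsimp only at hxy
      have hby : bl x = bl y := by
        rw [← hbl' u x, ← hbl' u y, hxy]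
      rw [key u (bl x) y hby.symm] at hxy
      have := (u (bl x)).injective (Subtype.ext hxy)
      exact congrArg Subtype.val this
    · intro u _ u' _ h
      funext a
      apply Equiv.ext
      rintro ⟨x, hx⟩
      have hx' := hx
      subst hx'
      exact Subtype.ext (congrFun h x)
    · intro g hg
      rw [Finset.mem_filter, mem_GS] at hg
      obtain ⟨⟨hpres, -⟩, hinj⟩ := hg
      have hf : ∀ a : Fin p, Function.Bijective
          (fun z : {x : Fin n // bl x = a} => (⟨g z.1, by rw [hpres z.1 (Finset.mem_univ _)]; exact z.2⟩ : {x : Fin n // bl x = a})) := by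
        intro a
        rw [← Finite.injective_iff_bijective]
        rintro ⟨x, hx⟩ ⟨y, hy⟩ hxy
        exact Subtype.ext (hinj (congrArg Subtype.val hxy))
      refine ⟨fun a => Equiv.ofBijective _ (hf a), Finset.mem_univ _, ?_⟩
      funext x
      rfl
  rw [← hcb, Finset.card_univ, Fintype.card_pi]
  refine Finset.prod_congr rfl fun a _ => ?_
  rw [Fintype.card_perm, Fintype.card_subtype, hcard]

end BlockDetAux

/-- Over an arbitrary commutative ring:
`n₁!⋯n_p! · det A = Σ_{σ ∈ S_n} ε(σ) · ∏_{cycles (i₁ ⋯ iᵣ) of σ}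
Tr(A_{[bl i₁, bl i₂]} ⋯ A_{[bl iᵣ, bl i₁]})` (fixed points counting as cycles of
length 1). The partition of `{1,…,n}` into consecutive intervals `I₁,…,I_p` with
`|I_a| = n_a` is encoded by the monotone map `bl` with fiber cardinalities `nv a`. -/
theorem factorials_mul_det_blockMatrix_eq_sum_sign_prod_blockTraces
    {R : Type*} [CommRing R]
    (p : ℕ) (hp : 1 ≤ p) (nv : Fin p → ℕ) (hnv : ∀ a, 1 ≤ nv a)
    (n : ℕ) (hn : n = ∑ a, nv a)
    (bl : Fin n → Fin p) (hbl : Monotone bl)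
    (hcard : ∀ a, (Finset.univ.filter fun i => bl i = a).card = nv a)
    (A : Matrix (Fin n) (Fin n) R) :
    ((∏ a, (nv a).factorial : ℕ) : R) * A.det =
      ∑ σ : Equiv.Perm (Fin n),
        ((Equiv.Perm.sign σ : ℤ) : R) *
          ∏ i ∈ cycleReps σ, cycleBlockTrace bl A σ i := by
  classical
  have key : ∀ σ : Equiv.Perm (Fin n),
      (∏ i ∈ cycleReps σ, cycleBlockTrace bl A σ i)
        = ∑ g ∈ BlockDetAux.GS bl Finset.univ, ∏ x, A (g x) (g (σ x)) := by
    intro σ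
    have := BlockDetAux.prod_traces_eq bl A σ Finset.univ (fun x _ => Finset.mem_univ _)
    rwa [Finset.filter_true_of_mem (fun x _ => Finset.mem_univ x)] at this
  have det_g : ∀ g : Fin n → Fin n,
      (∑ σ : Equiv.Perm (Fin n), ((Equiv.Perm.sign σ : ℤ) : R) * ∏ x, A (g x) (g (σ x)))
        = (A.submatrix g g).det := by
    intro g
    rw [← Matrix.det_transpose, Matrix.det_apply']
    refine Finset.sum_congr rfl fun σ _ => ?_
    rfl
  have det_val : ∀ g : Fin n → Fin n,
      (A.submatrix g g).det = if Function.Injective g then A.det else 0 := by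
    intro g
    by_cases h : Function.Injective g
    · rw [if_pos h]
      have hb := Finite.injective_iff_bijective.mp h
      rw [show A.submatrix g g = A.submatrix (Equiv.ofBijective g hb) (Equiv.ofBijective g hb)
        from rfl, Matrix.det_submatrix_equiv_self]
    · rw [if_neg h]
      rw [Function.not_injective_iff] at h
      obtain ⟨a, b, hab, hne⟩ := h
      apply Matrix.det_zero_of_row_eq hne
      funext j
      show A (g a) (g j) = A (g b) (g j)
      rw [hab]
  symm
  calc ∑ σ : Equiv.Perm (Fin n), ((Equiv.Perm.sign σ : ℤ) : R) *
          ∏ i ∈ cycleReps σ, cycleBlockTrace bl A σ i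
      = ∑ σ : Equiv.Perm (Fin n), ∑ g ∈ BlockDetAux.GS bl Finset.univ,
          ((Equiv.Perm.sign σ : ℤ) : R) * ∏ x, A (g x) (g (σ x)) := by
        refine Finset.sum_congr rfl fun σ _ => ?_
        rw [key σ, Finset.mul_sum]
    _ = ∑ g ∈ BlockDetAux.GS bl Finset.univ, ∑ σ : Equiv.Perm (Fin n),
          ((Equiv.Perm.sign σ : ℤ) : R) * ∏ x, A (g x) (g (σ x)) := Finset.sum_comm
    _ = ∑ g ∈ BlockDetAux.GS bl Finset.univ, (A.submatrix g g).det := by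
        exact Finset.sum_congr rfl fun g _ => det_g g
    _ = ∑ g ∈ BlockDetAux.GS bl Finset.univ,
          (if Function.Injective g then A.det else 0) := by
        exact Finset.sum_congr rfl fun g _ => det_val g
    _ = ∑ g ∈ (BlockDetAux.GS bl Finset.univ).filter (fun g => Function.Injective g),
          A.det := (Finset.sum_filter _ _).symm
    _ = (((BlockDetAux.GS bl Finset.univ).filter
          (fun g => Function.Injective g)).card : R) * A.det := by
        rw [Finset.sum_const, nsmul_eq_mul]
    _ = ((∏ a, (nv a).factorial : ℕ) : R) * A.det := by
        rw [BlockDetAux.card_inj bl nv hcard]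
end

section
/- Let R ⊆ {1,…,n} and let δ be a kinematic permutation of R. Then Σ_{σ ∈ S_n with R_σ = R and δ_σ = δ} ∏_{a=1}^p (−n_a)^{ℓ_a(σ)} = (−1)^{n + |R|} · ∏_{a=1}^p ( n_a − |R ∩ I_a| )!. -/
open Matrix

/-- `R_σ = { i : bl (σ⁻¹ i) ≠ bl i }`. -/
def Rsig {n p : ℕ} (bl : Fin n → Fin p) (σ : Equiv.Perm (Fin n)) : Finset (Fin n) :=
  Finset.univ.filter fun i => bl (σ⁻¹ i) ≠ bl i

/-- `t(σ,i) = min { k ≥ 1 : bl (σ^k i) ≠ bl i }`.  For `i ∈ R_σ` such a `k`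
exists with `k ≤ n`, so the minimum may be taken over `1 ≤ k ≤ n`
(with junk value `1` otherwise). -/
def tmin {n p : ℕ} (bl : Fin n → Fin p) (σ : Equiv.Perm (Fin n)) (i : Fin n) : ℕ :=
  WithTop.untopD 1 (((Finset.Icc 1 n).filter fun k => bl ((σ ^ k) i) ≠ bl i).min)

/-- `ℓ_a(σ)`: the number of cycles of `σ` entirely contained in the block `I_a`
(fixed points included), each cycle counted via its minimal representative. -/
def cyclesInBlock {n p : ℕ} (bl : Fin n → Fin p) (σ : Equiv.Perm (Fin n)) (a : Fin p) : ℕ :=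
  (Finset.univ.filter fun i : Fin n =>
      (∀ k ∈ Finset.range n, bl ((σ ^ k) i) = a) ∧
      ∀ k ∈ Finset.range n, i ≤ (σ ^ k) i).card

theorem Equiv.Perm.apply_inv_self {α : Type*} (f : Equiv.Perm α) (x : α) : f (f⁻¹ x) = x :=
  Equiv.apply_symm_apply f x

theorem Equiv.Perm.inv_apply_self {α : Type*} (f : Equiv.Perm α) (x : α) : f⁻¹ (f x) = x :=
  Equiv.symm_apply_apply f x

section Kin7aux
open Finset Equiv
open scoped Classical
namespace Kin7

lemma perm_pow_fix {α : Type*} (σ : Equiv.Perm α) {e : α} (h : σ e = e) :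
    ∀ k : ℕ, (σ ^ k) e = e := by
  intro k
  induction k with
  | zero => rfl
  | succ k ih => rw [pow_succ, Equiv.Perm.mul_apply, h, ih]

lemma perm_pow_eq_fix_iff {α : Type*} (σ : Equiv.Perm α) {e : α} (h : σ e = e)
    (k : ℕ) (x : α) : (σ ^ k) x = e ↔ x = e := by
  constructor
  · intro hx
    exact (σ ^ k).injective (by rw [hx, perm_pow_fix σ h])
  · rintro rfl; exact perm_pow_fix σ h k

lemma exists_period {n : ℕ} (σ : Equiv.Perm (Fin n)) (i : Fin n) :
    ∃ d, 1 ≤ d ∧ d ≤ n ∧ (σ ^ d) i = i := by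
  have key : ∀ u v : ℕ, u < v → v ≤ n → (σ ^ u) i = (σ ^ v) i →
      ∃ d, 1 ≤ d ∧ d ≤ n ∧ (σ ^ d) i = i := by
    intro u v huv hvn heq
    refine ⟨v - u, by omega, by omega, ?_⟩
    have h1 : (σ ^ u) ((σ ^ (v - u)) i) = (σ ^ u) i := by
      rw [← Equiv.Perm.mul_apply, ← pow_add, show u + (v - u) = v by omega, ← heq]
    exact (σ ^ u).injective h1
  have hlt : Fintype.card (Fin n) < Fintype.card (Fin (n + 1)) := by simp
  obtain ⟨a, b, hab, heq⟩ :=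
    Fintype.exists_ne_map_eq_of_card_lt (fun k : Fin (n + 1) => (σ ^ (k : ℕ)) i) hlt
  rcases lt_or_gt_of_ne (fun hv : (a : ℕ) = (b : ℕ) => hab (Fin.ext hv)) with h | h
  · exact key a b h (by omega) heq
  · exact key b a h (by omega) heq.symm

lemma forall_pow_of_forall_lt {n : ℕ} (σ : Equiv.Perm (Fin n)) (i : Fin n)
    (Q : Fin n → Prop) (h : ∀ k < n, Q ((σ ^ k) i)) : ∀ k, Q ((σ ^ k) i) := by
  obtain ⟨d, hd1, hdn, hdi⟩ := exists_period σ i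
  intro k
  induction k using Nat.strong_induction_on with
  | _ k ih =>
    by_cases hk : k < n
    · exact h k hk
    · have hdk : d ≤ k := le_trans hdn (le_of_not_gt hk)
      have hkk : (σ ^ k) i = (σ ^ (k - d)) i := by
        conv_lhs => rw [show k = (k - d) + d by omega]
        rw [pow_add, Equiv.Perm.mul_apply, hdi]
      rw [hkk]
      exact ih (k - d) (by omega)

noncomputable def cnt {n : ℕ} (σ : Equiv.Perm (Fin n)) (Q : Fin n → Prop) : ℕ :=
  (Finset.univ.filter fun i => (∀ k : ℕ, Q ((σ ^ k) i)) ∧ ∀ k : ℕ, i ≤ (σ ^ k) i).card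

lemma cnt_congr {n : ℕ} (σ : Equiv.Perm (Fin n)) {Q Q' : Fin n → Prop}
    (h : ∀ i, Q i ↔ Q' i) : cnt σ Q = cnt σ Q' := by
  unfold cnt
  congr 1
  apply Finset.filter_congr
  intro i _
  simp only [h]

lemma orbit_sub {n : ℕ} (σ'' : Equiv.Perm (Fin n)) (e j : Fin n) (he : σ'' e = e)
    (x : Fin n) (hx : x ≠ e) (k : ℕ) :
    ∃ m, ((σ'' * Equiv.swap e j) ^ m) x = (σ'' ^ k) x := by
  induction k with
  | zero => exact ⟨0, rfl⟩
  | succ k ih =>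
    obtain ⟨m, hm⟩ := ih
    have hy : (σ'' ^ k) x ≠ e := fun h => hx ((perm_pow_eq_fix_iff σ'' he k x).1 h)
    by_cases hyj : (σ'' ^ k) x = j
    · refine ⟨m + 2, ?_⟩
      have h1 : ((σ'' * Equiv.swap e j) ^ (m + 1)) x = e := by
        rw [pow_succ', Equiv.Perm.mul_apply, hm, Equiv.Perm.mul_apply, hyj,
          Equiv.swap_apply_right, he]
      rw [pow_succ', Equiv.Perm.mul_apply, h1, Equiv.Perm.mul_apply,
        Equiv.swap_apply_left, pow_succ', Equiv.Perm.mul_apply, hyj]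
    · refine ⟨m + 1, ?_⟩
      rw [pow_succ', Equiv.Perm.mul_apply, hm, Equiv.Perm.mul_apply,
        Equiv.swap_apply_of_ne_of_ne hy hyj, pow_succ', Equiv.Perm.mul_apply]

lemma orbit_sup {n : ℕ} (σ'' : Equiv.Perm (Fin n)) (e j : Fin n) (he : σ'' e = e)
    (x : Fin n) (hx : x ≠ e) (k : ℕ) :
    (((σ'' * Equiv.swap e j) ^ k) x = e ∧ ∃ m, (σ'' ^ m) x = j) ∨
      ∃ m, ((σ'' * Equiv.swap e j) ^ k) x = (σ'' ^ m) x := by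
  induction k with
  | zero => exact Or.inr ⟨0, rfl⟩
  | succ k ih =>
    rcases ih with ⟨hke, m, hmj⟩ | ⟨m, hm⟩
    · refine Or.inr ⟨m + 1, ?_⟩
      rw [pow_succ', Equiv.Perm.mul_apply, hke, Equiv.Perm.mul_apply,
        Equiv.swap_apply_left, pow_succ', Equiv.Perm.mul_apply, hmj]
    · have hy : (σ'' ^ m) x ≠ e := fun h => hx ((perm_pow_eq_fix_iff σ'' he m x).1 h)
      by_cases hyj : (σ'' ^ m) x = j
      · refine Or.inl ⟨?_, m, hyj⟩
        rw [pow_succ', Equiv.Perm.mul_apply, hm, Equiv.Perm.mul_apply, hyj,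
          Equiv.swap_apply_right, he]
      · refine Or.inr ⟨m + 1, ?_⟩
        rw [pow_succ', Equiv.Perm.mul_apply, hm, Equiv.Perm.mul_apply,
          Equiv.swap_apply_of_ne_of_ne hy hyj, pow_succ', Equiv.Perm.mul_apply]

lemma cnt_fix {n p : ℕ} (bl : Fin n → Fin p) (R : Finset (Fin n))
    (σ'' : Equiv.Perm (Fin n)) (s : Finset (Fin n)) (e : Fin n)
    (he : σ'' e = e) (hes : e ∈ s) (heR : e ∉ R) (a a₀ : Fin p) (hea : bl e = a₀) :
    cnt σ'' (fun i => i ∈ s ∧ bl i = a ∧ i ∉ R) =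
      cnt σ'' (fun i => i ∈ s.erase e ∧ bl i = a ∧ i ∉ R) + (if a = a₀ then 1 else 0) := by
  unfold cnt
  set F := Finset.univ.filter fun i =>
    (∀ k : ℕ, (σ'' ^ k) i ∈ s ∧ bl ((σ'' ^ k) i) = a ∧ (σ'' ^ k) i ∉ R) ∧
      ∀ k : ℕ, i ≤ (σ'' ^ k) i with hF
  set F' := Finset.univ.filter fun i =>
    (∀ k : ℕ, (σ'' ^ k) i ∈ s.erase e ∧ bl ((σ'' ^ k) i) = a ∧ (σ'' ^ k) i ∉ R) ∧
      ∀ k : ℕ, i ≤ (σ'' ^ k) i with hF'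
  have hmemF : ∀ i, i ∈ F ↔
      ((∀ k : ℕ, (σ'' ^ k) i ∈ s ∧ bl ((σ'' ^ k) i) = a ∧ (σ'' ^ k) i ∉ R) ∧
        ∀ k : ℕ, i ≤ (σ'' ^ k) i) := by
    intro i; rw [hF]; simp
  have hmemF' : ∀ i, i ∈ F' ↔
      ((∀ k : ℕ, (σ'' ^ k) i ∈ s.erase e ∧ bl ((σ'' ^ k) i) = a ∧ (σ'' ^ k) i ∉ R) ∧
        ∀ k : ℕ, i ≤ (σ'' ^ k) i) := by
    intro i; rw [hF']; simp
  have heF' : e ∉ F' := by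
    rw [hmemF']
    rintro ⟨h1, -⟩
    have := (h1 0).1
    simp [Finset.mem_erase] at this
  have hne : ∀ i, i ≠ e → (i ∈ F ↔ i ∈ F') := by
    intro i hi
    rw [hmemF, hmemF']
    have hke : ∀ k : ℕ, (σ'' ^ k) i ≠ e := fun k h =>
      hi ((perm_pow_eq_fix_iff σ'' he k i).1 h)
    constructor
    · rintro ⟨h1, h2⟩
      exact ⟨fun k => ⟨Finset.mem_erase.2 ⟨hke k, (h1 k).1⟩, (h1 k).2⟩, h2⟩
    · rintro ⟨h1, h2⟩
      exact ⟨fun k => ⟨Finset.mem_erase.1 (h1 k).1 |>.2, (h1 k).2⟩, h2⟩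
  by_cases ha : a = a₀
  · have heFmem : e ∈ F := by
      rw [hmemF]
      constructor
      · intro k; rw [perm_pow_fix σ'' he]; exact ⟨hes, by rw [hea, ha], heR⟩
      · intro k; rw [perm_pow_fix σ'' he]
    have : F = insert e F' := by
      ext i
      by_cases hi : i = e
      · subst hi; simp [heFmem]
      · simp [Finset.mem_insert, hi, hne i hi]
    rw [this, Finset.card_insert_of_notMem heF', if_pos ha]
  · have heFnot : e ∉ F := by
      rw [hmemF]
      rintro ⟨h1, -⟩
      have := (h1 0).2.1
      simp only [pow_zero, Equiv.Perm.coe_one, id_eq] at this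
      have h2 : a = a₀ := by rw [← this, hea]
      exact ha h2
    have : F = F' := by
      ext i
      by_cases hi : i = e
      · subst hi; simp [heFnot, heF']
      · exact hne i hi
    rw [this, if_neg ha, add_zero]

lemma cnt_ins {n p : ℕ} (bl : Fin n → Fin p) (R : Finset (Fin n))
    (σ'' : Equiv.Perm (Fin n)) (s : Finset (Fin n)) (e j : Fin n) (a₀ : Fin p)
    (he : σ'' e = e) (hes : e ∈ s) (heR : e ∉ R) (hea : bl e = a₀)
    (hjs : j ∈ s) (hja : bl j = a₀) (hje : j ≠ e)
    (hmax : ∀ i ∈ s, bl i = a₀ → i ∉ R → i ≤ e) (a : Fin p) :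
    cnt (σ'' * Equiv.swap e j) (fun i => i ∈ s ∧ bl i = a ∧ i ∉ R) =
      cnt σ'' (fun i => i ∈ s.erase e ∧ bl i = a ∧ i ∉ R) := by
  set τ := σ'' * Equiv.swap e j with hτ
  have hτj : τ j = e := by
    rw [hτ, Equiv.Perm.mul_apply, Equiv.swap_apply_right, he]
  unfold cnt
  congr 1
  ext i
  simp only [Finset.mem_filter, Finset.mem_univ, true_and]
  constructor
  · rintro ⟨h1, h2⟩
    -- first: i ≠ e
    have hie : i ≠ e := by
      intro hie0
      rw [hie0] at h1 h2
      have haa : a = a₀ := by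
        have := (h1 0).2.1
        simp only [pow_zero, Equiv.Perm.coe_one, id_eq] at this
        rw [← this, hea]
      -- find k with τ^k e = j
      obtain ⟨d, hd1, hdn, hdj⟩ := exists_period τ j
      have hkj : (τ ^ (d - 1)) e = j := by
        have hstep : (τ ^ (d - 1)) (τ j) = (τ ^ d) j := by
          rw [← Equiv.Perm.mul_apply, ← pow_succ, show d - 1 + 1 = d by omega]
        rw [hτj] at hstep
        rw [hstep, hdj]
      have hQj := h1 (d - 1)
      rw [hkj] at hQj
      have hle := h2 (d - 1)
      rw [hkj] at hle
      have : j ≤ e := hmax j hjs hja hQj.2.2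
      exact hje (le_antisymm this hle)
    refine ⟨?_, ?_⟩
    · intro k
      obtain ⟨m, hm⟩ := orbit_sub σ'' e j he i hie k
      have hQ := h1 m
      rw [hm] at hQ
      have hne : (σ'' ^ k) i ≠ e := fun h => hie ((perm_pow_eq_fix_iff σ'' he k i).1 h)
      exact ⟨Finset.mem_erase.2 ⟨hne, hQ.1⟩, hQ.2⟩
    · intro k
      obtain ⟨m, hm⟩ := orbit_sub σ'' e j he i hie k
      rw [← hm]
      exact h2 m
  · rintro ⟨h1, h2⟩
    have hie : i ≠ e := by
      intro hi
      have := (h1 0).1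
      simp only [pow_zero, Equiv.Perm.coe_one, id_eq, hi, Finset.mem_erase] at this
      exact this.1 rfl
    have hQi := h1 0
    simp only [pow_zero, Equiv.Perm.coe_one, id_eq] at hQi
    refine ⟨?_, ?_⟩
    · intro k
      rcases orbit_sup σ'' e j he i hie k with ⟨hke, m, hmj⟩ | ⟨m, hm⟩
      · have hQj := h1 m
        rw [hmj] at hQj
        have haa : a = a₀ := by rw [← hQj.2.1, hja]
        rw [hke]
        exact ⟨hes, by rw [hea, haa], heR⟩
      · rw [hm]
        have hQ := h1 m
        exact ⟨Finset.mem_of_mem_erase hQ.1, hQ.2⟩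
    · intro k
      rcases orbit_sup σ'' e j he i hie k with ⟨hke, m, hmj⟩ | ⟨m, hm⟩
      · rw [hke]
        have haa : a = a₀ := by
          have hQj := h1 m
          rw [hmj] at hQj
          rw [← hQj.2.1, hja]
        exact hmax i (Finset.mem_of_mem_erase hQi.1) (haa ▸ hQi.2.1) hQi.2.2
      · rw [hm]; exact h2 m

section Delta

variable {n p : ℕ} (bl : Fin n → Fin p) (R : Finset (Fin n)) (δ : Equiv.Perm (Fin n))
variable (hδkin : ∀ i ∈ R, bl (δ i) ≠ bl i) (hδfix : ∀ i ∉ R, δ i = i)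

include hδkin hδfix

lemma delta_mem : ∀ i, δ i ∈ R ↔ i ∈ R := by
  intro i
  constructor
  · intro h
    by_contra hi
    rw [hδfix i hi] at h
    exact hi h
  · intro h
    by_contra hd
    have := hδfix _ hd
    have h2 : δ i = i := δ.injective this
    exact hδkin i h (by rw [h2])

lemma delta_inv_fix : ∀ i ∉ R, δ⁻¹ i = i := by
  intro i hi
  apply δ.injective
  rw [Equiv.Perm.apply_inv_self, hδfix i hi]

lemma delta_inv_mem : ∀ i, δ⁻¹ i ∈ R ↔ i ∈ R := by
  intro i
  have := delta_mem bl R δ hδkin hδfix (δ⁻¹ i)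
  rw [Equiv.Perm.apply_inv_self] at this
  exact this.symm

lemma Rsig_mul (σ' : Equiv.Perm (Fin n)) (hσ' : ∀ i, bl (σ' i) = bl i) :
    Rsig bl (δ * σ') = R := by
  have hinv : ∀ x, bl (σ'⁻¹ x) = bl x := by
    intro x
    have h0 := hσ' (σ'⁻¹ x)
    rw [Equiv.Perm.apply_inv_self] at h0
    exact h0.symm
  ext i
  rw [Rsig, Finset.mem_filter]
  simp only [Finset.mem_univ, true_and]
  rw [_root_.mul_inv_rev, Equiv.Perm.mul_apply, hinv]
  by_cases hi : i ∈ R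
  · simp only [hi, iff_true]
    have hd : δ⁻¹ i ∈ R := (delta_inv_mem bl R δ hδkin hδfix i).2 hi
    have := hδkin _ hd
    rw [Equiv.Perm.apply_inv_self] at this
    exact fun h => this h.symm
  · simp only [hi, iff_false, not_not]
    rw [delta_inv_fix bl R δ hδkin hδfix i hi]

lemma cnt_transfer (σ' : Equiv.Perm (Fin n)) (hσ' : ∀ i, bl (σ' i) = bl i) (a : Fin p) :
    cnt (δ * σ') (fun i => bl i = a) = cnt σ' (fun i => bl i = a ∧ i ∉ R) := by
  have hRs := Rsig_mul bl R δ hδkin hδfix σ' hσ'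
  set σ := δ * σ' with hσ
  have happ : ∀ x, σ x = δ (σ' x) := fun x => rfl
  have hRmem : ∀ x, x ∈ R ↔ bl (σ⁻¹ x) ≠ bl x := by
    intro x
    rw [← hRs, Rsig, Finset.mem_filter]
    simp
  unfold cnt
  congr 1
  ext i
  simp only [Finset.mem_filter, Finset.mem_univ, true_and]
  constructor
  · rintro ⟨h1, h2⟩
    have claim0 : ∀ k, (σ ^ k) i ∉ R := by
      intro k
      intro hk
      have hbl := (hRmem _).1 hk
      cases k with
      | zero =>
        obtain ⟨d, hd1, hdn, hdi⟩ := exists_period σ i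
        have hinv : σ⁻¹ ((σ ^ 0) i) = (σ ^ (d - 1)) i := by
          simp only [pow_zero, Equiv.Perm.coe_one, id_eq]
          apply σ.injective
          rw [Equiv.Perm.apply_inv_self, ← Equiv.Perm.mul_apply, ← pow_succ',
            show d - 1 + 1 = d by omega, hdi]
        rw [hinv] at hbl
        exact hbl (by rw [h1, h1])
      | succ k =>
        have hinv : σ⁻¹ ((σ ^ (k + 1)) i) = (σ ^ k) i := by
          apply σ.injective
          rw [Equiv.Perm.apply_inv_self, ← Equiv.Perm.mul_apply, ← pow_succ']
        rw [hinv] at hbl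
        exact hbl (by rw [h1, h1])
    have claim1 : ∀ k, (σ ^ k) i = (σ' ^ k) i ∧ (σ' ^ k) i ∉ R := by
      intro k
      induction k with
      | zero => exact ⟨rfl, claim0 0⟩
      | succ k ih =>
        have hpow : (σ' ^ (k + 1)) i = σ' ((σ' ^ k) i) := by
          rw [pow_succ', Equiv.Perm.mul_apply]
        have hstep : (σ ^ (k + 1)) i = δ ((σ' ^ (k + 1)) i) := by
          rw [pow_succ', Equiv.Perm.mul_apply, ih.1, hpow]
          rfl
        have hnR : (σ' ^ (k + 1)) i ∉ R := by
          intro hmem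
          have : δ ((σ' ^ (k + 1)) i) ∈ R :=
            (delta_mem bl R δ hδkin hδfix _).2 hmem
          rw [← hstep] at this
          exact claim0 (k + 1) this
        refine ⟨?_, hnR⟩
        rw [hstep, hδfix _ hnR]
    constructor
    · intro k
      refine ⟨?_, (claim1 k).2⟩
      rw [← (claim1 k).1]
      exact h1 k
    · intro k
      rw [← (claim1 k).1]
      exact h2 k
  · rintro ⟨h1, h2⟩
    have claim : ∀ k, (σ ^ k) i = (σ' ^ k) i := by
      intro k
      induction k with
      | zero => rfl
      | succ k ih =>
        have hpow : (σ' ^ (k + 1)) i = σ' ((σ' ^ k) i) := by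
          rw [pow_succ', Equiv.Perm.mul_apply]
        rw [pow_succ', Equiv.Perm.mul_apply, ih, happ, ← hpow]
        exact hδfix _ (h1 (k + 1)).2
    constructor
    · intro k
      rw [claim k]
      exact (h1 k).1
    · intro k
      rw [claim k]
      exact h2 k

/-- first-return structure of `tmin` of `σ = δ * σ'` for block preserving `σ'`. -/
lemma tmin_mul (σ' : Equiv.Perm (Fin n)) (hσ' : ∀ i, bl (σ' i) = bl i)
    (i : Fin n) (hi : i ∈ R) :
    ∃ m, 1 ≤ m ∧ (σ' ^ m) i ∈ R ∧ (∀ k, 1 ≤ k → k < m → (σ' ^ k) i ∉ R) ∧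
      tmin bl (δ * σ') i = m ∧ ((δ * σ') ^ m) i = δ ((σ' ^ m) i) := by
  have hblpow : ∀ k x, bl ((σ' ^ k) x) = bl x := by
    intro k
    induction k with
    | zero => intro x; rfl
    | succ k ih =>
      intro x
      rw [pow_succ', Equiv.Perm.mul_apply, hσ' _, ih]
  obtain ⟨d, hd1, hdn, hdi⟩ := exists_period σ' i
  have hex : ∃ k, 1 ≤ k ∧ (σ' ^ k) i ∈ R := ⟨d, hd1, by rw [hdi]; exact hi⟩
  set m := Nat.find hex with hm
  obtain ⟨hm1, hmR⟩ := Nat.find_spec hex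
  have hmin : ∀ k, 1 ≤ k → k < m → (σ' ^ k) i ∉ R := by
    intro k h1k hkm hkR
    exact Nat.find_min hex hkm ⟨h1k, hkR⟩
  have hmn : m ≤ n := le_trans (Nat.find_min' hex ⟨hd1, by rw [hdi]; exact hi⟩) hdn
  set σ := δ * σ' with hσ
  have happ : ∀ x, σ x = δ (σ' x) := fun x => rfl
  have traj : ∀ k, k < m → (σ ^ k) i = (σ' ^ k) i := by
    intro k
    induction k with
    | zero => intro _; rfl
    | succ k ih =>
      intro hkm
      have h1 : (σ ^ (k + 1)) i = δ ((σ' ^ (k + 1)) i) := by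
        rw [pow_succ', Equiv.Perm.mul_apply, ih (by omega), happ]
        congr 1
        rw [pow_succ', Equiv.Perm.mul_apply]
      have hfix := hδfix ((σ' ^ (k + 1)) i) (hmin (k + 1) (by omega) hkm)
      rw [h1, hfix]
  have hb : (σ ^ m) i = δ ((σ' ^ m) i) := by
    have hm0 : m = (m - 1) + 1 := by omega
    rw [hm0, pow_succ', Equiv.Perm.mul_apply, traj (m - 1) (by omega), happ]
    congr 1
    rw [pow_succ', Equiv.Perm.mul_apply]
  have htm : tmin bl σ i = m := by
    have hFm : m ∈ (Finset.Icc 1 n).filter fun k => bl ((σ ^ k) i) ≠ bl i := by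
      rw [Finset.mem_filter, Finset.mem_Icc]
      refine ⟨⟨hm1, hmn⟩, ?_⟩
      rw [hb]
      have := hδkin _ hmR
      rw [hblpow m i] at this
      exact this
    have hFlb : ∀ k ∈ (Finset.Icc 1 n).filter fun k => bl ((σ ^ k) i) ≠ bl i, m ≤ k := by
      intro k hk
      rw [Finset.mem_filter, Finset.mem_Icc] at hk
      by_contra hkm
      push_neg at hkm
      have h1 : (σ ^ k) i = (σ' ^ k) i := traj k hkm
      exact hk.2 (by rw [h1, hblpow])
    have : ((Finset.Icc 1 n).filter fun k => bl ((σ ^ k) i) ≠ bl i).min = (m : WithTop ℕ) :=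
      le_antisymm (Finset.min_le hFm) (Finset.le_min fun b hb' =>
        WithTop.coe_le_coe.2 (hFlb b hb'))
    rw [tmin, this]
    rfl
  exact ⟨m, hm1, hmR, hmin, htm, hb⟩

omit hδkin hδfix in
/-- specification of tmin for σ with Rsig = R -/
lemma tmin_spec (σ : Equiv.Perm (Fin n)) (hR : Rsig bl σ = R) (i : Fin n) (hi : i ∈ R) :
    1 ≤ tmin bl σ i ∧ bl ((σ ^ tmin bl σ i) i) ≠ bl i ∧
      ∀ k, 1 ≤ k → k < tmin bl σ i → bl ((σ ^ k) i) = bl i := by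
  have hRmem : bl (σ⁻¹ i) ≠ bl i := by
    have : i ∈ Rsig bl σ := by rw [hR]; exact hi
    rw [Rsig, Finset.mem_filter] at this
    exact this.2
  obtain ⟨d, hd1, hdn, hdi⟩ := exists_period σ i
  have hd2 : 2 ≤ d := by
    rcases Nat.lt_or_ge d 2 with h | h
    · exfalso
      have hd1' : d = 1 := by omega
      rw [hd1'] at hdi
      simp only [pow_one] at hdi
      have : σ⁻¹ i = i := by
        apply σ.injective
        rw [Equiv.Perm.apply_inv_self, hdi]
      exact hRmem (by rw [this])
    · exact h
  have hwit : d - 1 ∈ (Finset.Icc 1 n).filter fun k => bl ((σ ^ k) i) ≠ bl i := by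
    rw [Finset.mem_filter, Finset.mem_Icc]
    refine ⟨⟨by omega, by omega⟩, ?_⟩
    have hinv : (σ ^ (d - 1)) i = σ⁻¹ i := by
      apply σ.injective
      rw [Equiv.Perm.apply_inv_self, ← Equiv.Perm.mul_apply, ← pow_succ',
        show d - 1 + 1 = d by omega, hdi]
    rw [hinv]
    exact hRmem
  obtain ⟨m, hmin⟩ := Finset.min_of_mem hwit
  have hmmem : m ∈ (Finset.Icc 1 n).filter fun k => bl ((σ ^ k) i) ≠ bl i :=
    Finset.mem_of_min hmin
  have htm : tmin bl σ i = m := by rw [tmin, hmin]; rfl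
  rw [Finset.mem_filter, Finset.mem_Icc] at hmmem
  rw [htm]
  refine ⟨hmmem.1.1, hmmem.2, ?_⟩
  intro k h1k hkm
  by_contra hbl
  have hkmem : k ∈ (Finset.Icc 1 n).filter fun k => bl ((σ ^ k) i) ≠ bl i := by
    rw [Finset.mem_filter, Finset.mem_Icc]
    exact ⟨⟨h1k, by omega⟩, hbl⟩
  have hle := Finset.min_le hkmem
  rw [hmin] at hle
  have hmk : m ≤ k := WithTop.coe_le_coe.1 hle
  omega


lemma bwd (σ' : Equiv.Perm (Fin n)) (hσ'bl : ∀ i, bl (σ' i) = bl i)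
    (hc2 : ∀ i ∈ R, ∀ k : ℕ, (σ' ^ k) i ∈ R → (σ' ^ k) i = i) :
    Rsig bl (δ * σ') = R ∧ ∀ i ∈ R, δ i = ((δ * σ') ^ tmin bl (δ * σ') i) i := by
  refine ⟨Rsig_mul bl R δ hδkin hδfix σ' hσ'bl, ?_⟩
  intro i hi
  obtain ⟨m, hm1, hmR, hmin, htm, happ⟩ := tmin_mul bl R δ hδkin hδfix σ' hσ'bl i hi
  rw [htm, happ, hc2 i hi m hmR]

lemma fwd_bl (σ : Equiv.Perm (Fin n)) (hR : Rsig bl σ = R)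
    (ht : ∀ i ∈ R, δ i = (σ ^ tmin bl σ i) i) :
    ∀ i, bl ((δ⁻¹ * σ) i) = bl i := by
  intro i
  have happ : (δ⁻¹ * σ) i = δ⁻¹ (σ i) := rfl
  by_cases hj : σ i ∈ R
  · have hx : δ⁻¹ (σ i) ∈ R := (delta_inv_mem bl R δ hδkin hδfix (σ i)).2 hj
    set x := δ⁻¹ (σ i) with hxdef
    have h1 : δ x = σ i := by rw [hxdef, Equiv.Perm.apply_inv_self]
    have h2 := ht x hx
    set t := tmin bl σ x with htdef
    obtain ⟨ht1, htne, htlt⟩ := tmin_spec bl R σ hR x hx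
    have h3 : (σ ^ t) x = σ i := by rw [← h2, h1]
    have h4 : (σ ^ (t - 1)) x = i := by
      apply σ.injective
      rw [← Equiv.Perm.mul_apply, ← pow_succ', show t - 1 + 1 = t by omega, h3]
    rw [happ]
    by_cases ht1' : t = 1
    · have : x = i := by
        rw [← h4, ht1']
        rfl
      rw [this]
    · have hblx : bl ((σ ^ (t - 1)) x) = bl x := htlt (t - 1) (by omega) (by omega)
      rw [h4] at hblx
      rw [hblx]
  · have hfix : δ⁻¹ (σ i) = σ i := delta_inv_fix bl R δ hδkin hδfix (σ i) hj
    have hnot : ¬ bl (σ⁻¹ (σ i)) ≠ bl (σ i) := by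
      intro hcon
      have : σ i ∈ Rsig bl σ := by
        rw [Rsig, Finset.mem_filter]
        exact ⟨Finset.mem_univ _, hcon⟩
      rw [hR] at this
      exact hj this
    rw [Equiv.Perm.inv_apply_self] at hnot
    push_neg at hnot
    rw [happ, hfix, hnot]

lemma fwd_c2 (σ : Equiv.Perm (Fin n)) (hR : Rsig bl σ = R)
    (ht : ∀ i ∈ R, δ i = (σ ^ tmin bl σ i) i)
    (hσ'bl : ∀ i, bl ((δ⁻¹ * σ) i) = bl i) :
    ∀ i ∈ R, ∀ k : ℕ, ((δ⁻¹ * σ) ^ k) i ∈ R → ((δ⁻¹ * σ) ^ k) i = i := by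
  set σ' := δ⁻¹ * σ with hσ'
  have hds : δ * σ' = σ := by rw [hσ', mul_inv_cancel_left]
  intro i hi
  obtain ⟨m, hm1, hmR, hmin, htm, happ⟩ := tmin_mul bl R δ hδkin hδfix σ' hσ'bl i hi
  rw [hds] at htm happ
  have hfixm : (σ' ^ m) i = i := by
    apply δ.injective
    rw [← happ, ← htm, ← ht i hi]
  intro k
  induction k using Nat.strong_induction_on with
  | _ k ih =>
    intro hk
    rcases Nat.eq_zero_or_pos k with rfl | hk0
    · rfl
    · rcases Nat.lt_or_ge k m with hkm | hkm
      · exact absurd hk (hmin k hk0 hkm)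
      · have hsplit : (σ' ^ k) i = (σ' ^ (k - m)) i := by
          conv_lhs => rw [show k = (k - m) + m by omega]
          rw [pow_add, Equiv.Perm.mul_apply, hfixm]
        rw [hsplit] at hk ⊢
        exact ih (k - m) (by omega) hk


end Delta

lemma cyclesInBlock_eq_cnt {n p : ℕ} (bl : Fin n → Fin p) (σ : Equiv.Perm (Fin n))
    (a : Fin p) : cyclesInBlock bl σ a = cnt σ (fun i => bl i = a) := by
  unfold cyclesInBlock cnt
  refine congrArg Finset.card ?_
  ext i
  simp only [Finset.mem_filter, Finset.mem_univ, true_and, Finset.mem_range]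
  constructor
  · rintro ⟨h1, h2⟩
    exact ⟨forall_pow_of_forall_lt σ i (fun x => bl x = a) h1,
      forall_pow_of_forall_lt σ i (fun x => i ≤ x) h2⟩
  · rintro ⟨h1, h2⟩
    exact ⟨fun k _ => h1 k, fun k _ => h2 k⟩


lemma main_induction {n p : ℕ} (bl : Fin n → Fin p) (R : Finset (Fin n)) (x : Fin p → ℤ) :
    ∀ s : Finset (Fin n), R ⊆ s →
    (∑ σ' ∈ Finset.univ.filter (fun σ' : Equiv.Perm (Fin n) =>
        (∀ i ∉ s, σ' i = i) ∧ (∀ i, bl (σ' i) = bl i) ∧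
        ∀ i ∈ R, ∀ k : ℕ, (σ' ^ k) i ∈ R → (σ' ^ k) i = i),
      ∏ a, x a ^ cnt σ' (fun i => i ∈ s ∧ bl i = a ∧ i ∉ R)) =
    ∏ a, ∏ j ∈ Finset.Ico ((R.filter fun i => bl i = a).card)
        ((s.filter fun i => bl i = a).card), (x a + (j : ℤ)) := by
  intro s
  induction s using Finset.strongInduction with
  | _ s ih =>
    intro hRs
    by_cases hsR : s = R
    · have hset : (Finset.univ.filter (fun σ' : Equiv.Perm (Fin n) =>
          (∀ i ∉ s, σ' i = i) ∧ (∀ i, bl (σ' i) = bl i) ∧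
          ∀ i ∈ R, ∀ k : ℕ, (σ' ^ k) i ∈ R → (σ' ^ k) i = i)) = {1} := by
        ext σ'
        simp only [Finset.mem_filter, Finset.mem_univ, true_and, Finset.mem_singleton]
        constructor
        · rintro ⟨hsupp, hbl, hc2⟩
          apply Equiv.ext
          intro i
          simp only [Equiv.Perm.one_apply]
          by_contra hne
          have hiR : i ∈ R := by
            by_contra h
            exact hne (hsupp i (by rwa [hsR]))
          have hfi : σ' i ∈ R := by
            by_contra h
            have h2 : σ' (σ' i) = σ' i := hsupp (σ' i) (by rwa [hsR])
            exact hne (σ'.injective h2)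
          have h3 := hc2 i hiR 1 (by simpa using hfi)
          simp only [pow_one] at h3
          exact hne h3
        · rintro rfl
          refine ⟨fun i _ => rfl, fun i => rfl, fun i hi k hk => ?_⟩
          simp
      rw [hset, Finset.sum_singleton]
      have hcnt : ∀ a : Fin p, cnt (1 : Equiv.Perm (Fin n))
          (fun i => i ∈ s ∧ bl i = a ∧ i ∉ R) = 0 := by
        intro a
        unfold cnt
        rw [Finset.card_eq_zero, Finset.eq_empty_iff_forall_notMem]
        intro i hi
        rw [Finset.mem_filter] at hi
        have h0 := hi.2.1 0
        simp only [pow_zero, Equiv.Perm.coe_one, id_eq] at h0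
        rw [hsR] at h0
        exact h0.2.2 h0.1
      simp only [hcnt, pow_zero, Finset.prod_const_one]
      rw [hsR]
      simp
    · -- inductive step
      obtain ⟨i₀, hi₀s, hi₀R⟩ : ∃ i, i ∈ s ∧ i ∉ R := by
        by_contra h
        push_neg at h
        exact hsR (Finset.Subset.antisymm (fun i hi => h i hi) hRs)
      set a₀ := bl i₀ with ha₀
      have hTne : (s.filter (fun i => bl i = a₀ ∧ i ∉ R)).Nonempty :=
        ⟨i₀, by rw [Finset.mem_filter]; exact ⟨hi₀s, rfl, hi₀R⟩⟩
      set e := (s.filter (fun i => bl i = a₀ ∧ i ∉ R)).max' hTne with he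
      have heT : e ∈ s.filter (fun i => bl i = a₀ ∧ i ∉ R) := Finset.max'_mem _ hTne
      rw [Finset.mem_filter] at heT
      have hes : e ∈ s := heT.1
      have hea : bl e = a₀ := heT.2.1
      have heR : e ∉ R := heT.2.2
      have hmax : ∀ i ∈ s, bl i = a₀ → i ∉ R → i ≤ e := fun i h1 h2 h3 =>
        Finset.le_max' _ i (by rw [Finset.mem_filter]; exact ⟨h1, h2, h3⟩)
      have hss : s.erase e ⊂ s := Finset.erase_ssubset hes
      have hRs' : R ⊆ s.erase e := fun i hiR =>
        Finset.mem_erase.2 ⟨fun hie => heR (hie ▸ hiR), hRs hiR⟩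
      have IH := ih (s.erase e) hss hRs'
      have hJe : e ∈ s.filter (fun i => bl i = a₀) := by
        rw [Finset.mem_filter]; exact ⟨hes, hea⟩
      -- the bijection
      have hswsw : ∀ (τ : Equiv.Perm (Fin n)) (j : Fin n),
          (τ * Equiv.swap e j) * Equiv.swap e j = τ := by
        intro τ j
        rw [mul_assoc, Equiv.swap_mul_self, mul_one]
      have hbij : (∑ σ' ∈ Finset.univ.filter (fun σ' : Equiv.Perm (Fin n) =>
            (∀ i ∉ s, σ' i = i) ∧ (∀ i, bl (σ' i) = bl i) ∧
            ∀ i ∈ R, ∀ k : ℕ, (σ' ^ k) i ∈ R → (σ' ^ k) i = i),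
          ∏ a, x a ^ cnt σ' (fun i => i ∈ s ∧ bl i = a ∧ i ∉ R)) =
          ∑ pr ∈ (s.filter (fun i => bl i = a₀)) ×ˢ
            (Finset.univ.filter (fun σ' : Equiv.Perm (Fin n) =>
              (∀ i ∉ s.erase e, σ' i = i) ∧ (∀ i, bl (σ' i) = bl i) ∧
              ∀ i ∈ R, ∀ k : ℕ, (σ' ^ k) i ∈ R → (σ' ^ k) i = i)),
          ∏ a, x a ^ cnt (pr.2 * Equiv.swap e pr.1)
            (fun i => i ∈ s ∧ bl i = a ∧ i ∉ R) := by
        apply Finset.sum_nbij' (i := fun τ => (τ⁻¹ e, τ * Equiv.swap e (τ⁻¹ e)))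
          (j := fun pr => pr.2 * Equiv.swap e pr.1)
        · -- forward membership
          intro τ hτ
          rw [Finset.mem_filter] at hτ
          obtain ⟨-, hsupp, hbl, hc2⟩ := hτ
          have hτj : τ (τ⁻¹ e) = e := Equiv.Perm.apply_inv_self τ e
          have hjs : τ⁻¹ e ∈ s := by
            by_contra h
            have h2 : τ (τ⁻¹ e) = τ⁻¹ e := hsupp _ h
            have h3 : e = τ⁻¹ e := hτj.symm.trans h2
            exact h (h3 ▸ hes)
          have hja : bl (τ⁻¹ e) = a₀ := by
            have h2 := hbl (τ⁻¹ e)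
            rw [hτj] at h2
            rw [← h2, hea]
          have hσ''e : (τ * Equiv.swap e (τ⁻¹ e)) e = e := by
            rw [Equiv.Perm.mul_apply, Equiv.swap_apply_left, hτj]
          rw [Finset.mem_product]
          constructor
          · rw [Finset.mem_filter]; exact ⟨hjs, hja⟩
          · rw [Finset.mem_filter]
            refine ⟨Finset.mem_univ _, ?_, ?_, ?_⟩
            · intro i hi
              by_cases hie : i = e
              · rw [hie]; exact hσ''e
              · have his : i ∉ s := fun h2 =>
                  hi (Finset.mem_erase.2 ⟨hie, h2⟩)
                have hij : i ≠ τ⁻¹ e := fun h2 => his (h2 ▸ hjs)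
                rw [Equiv.Perm.mul_apply, Equiv.swap_apply_of_ne_of_ne hie hij,
                  hsupp i his]
            · intro i
              rcases eq_or_ne i e with rfl | hie
              · rw [hσ''e]
              · rcases eq_or_ne i (τ⁻¹ e) with rfl | hij
                · rw [Equiv.Perm.mul_apply, Equiv.swap_apply_right, hbl e, hea, hja]
                · rw [Equiv.Perm.mul_apply, Equiv.swap_apply_of_ne_of_ne hie hij]
                  exact hbl i
            · intro i hiR k hk
              have hie : i ≠ e := fun h2 => heR (h2 ▸ hiR)
              obtain ⟨m, hm⟩ := orbit_sub (τ * Equiv.swap e (τ⁻¹ e)) e (τ⁻¹ e)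
                hσ''e i hie k
              rw [hswsw] at hm
              rw [← hm] at hk ⊢
              exact hc2 i hiR m hk
        · -- backward membership
          rintro ⟨j, σ''⟩ hpr
          rw [Finset.mem_product] at hpr
          obtain ⟨hjJ, hσ''⟩ := hpr
          rw [Finset.mem_filter] at hjJ hσ''
          obtain ⟨hjs, hja⟩ := hjJ
          obtain ⟨-, hsupp, hbl, hc2⟩ := hσ''
          have hσ''e : σ'' e = e := hsupp e (Finset.notMem_erase e s)
          rw [Finset.mem_filter]
          refine ⟨Finset.mem_univ _, ?_, ?_, ?_⟩
          · intro i hi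
            have hie : i ≠ e := fun h2 => hi (h2 ▸ hes)
            have hij : i ≠ j := fun h2 => hi (h2 ▸ hjs)
            rw [Equiv.Perm.mul_apply, Equiv.swap_apply_of_ne_of_ne hie hij,
              hsupp i (fun h2 => hi (Finset.mem_of_mem_erase h2))]
          · intro i
            rcases eq_or_ne i e with rfl | hie
            · rw [Equiv.Perm.mul_apply, Equiv.swap_apply_left]
              have h2 := hbl j
              rw [h2, hja, hea]
            · rcases eq_or_ne i j with rfl | hij
              · rw [Equiv.Perm.mul_apply, Equiv.swap_apply_right, hσ''e, hea, hja]
              · rw [Equiv.Perm.mul_apply, Equiv.swap_apply_of_ne_of_ne hie hij]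
                exact hbl i
          · intro i hiR k hk
            have hie : i ≠ e := fun h2 => heR (h2 ▸ hiR)
            rcases orbit_sup σ'' e j hσ''e i hie k with ⟨hke, -⟩ | ⟨m, hm⟩
            · rw [hke] at hk
              exact absurd hk heR
            · rw [hm] at hk ⊢
              exact hc2 i hiR m hk
        · -- left inverse
          intro τ hτ
          simp only
          rw [hswsw]
        · -- right inverse
          rintro ⟨j, σ''⟩ hpr
          rw [Finset.mem_product] at hpr
          obtain ⟨hjJ, hσ''⟩ := hpr
          rw [Finset.mem_filter] at hσ''
          have hσ''e : σ'' e = e := hσ''.2.1 e (Finset.notMem_erase e s)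
          have h1 : (σ'' * Equiv.swap e j) j = e := by
            rw [Equiv.Perm.mul_apply, Equiv.swap_apply_right, hσ''e]
          have h2 : (σ'' * Equiv.swap e j)⁻¹ e = j := by
            apply (σ'' * Equiv.swap e j).injective
            rw [Equiv.Perm.apply_inv_self, h1]
          simp only
          rw [h2, hswsw]
        · -- values
          intro τ hτ
          simp only
          rw [hswsw]
      rw [hbij, Finset.sum_product]
      -- inner sums
      have hinner : ∀ j ∈ s.filter (fun i => bl i = a₀),
          (∑ σ'' ∈ Finset.univ.filter (fun σ' : Equiv.Perm (Fin n) =>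
            (∀ i ∉ s.erase e, σ' i = i) ∧ (∀ i, bl (σ' i) = bl i) ∧
            ∀ i ∈ R, ∀ k : ℕ, (σ' ^ k) i ∈ R → (σ' ^ k) i = i),
          ∏ a, x a ^ cnt (σ'' * Equiv.swap e j)
            (fun i => i ∈ s ∧ bl i = a ∧ i ∉ R)) =
          (if j = e then x a₀ else 1) *
          ∑ σ'' ∈ Finset.univ.filter (fun σ' : Equiv.Perm (Fin n) =>
            (∀ i ∉ s.erase e, σ' i = i) ∧ (∀ i, bl (σ' i) = bl i) ∧
            ∀ i ∈ R, ∀ k : ℕ, (σ' ^ k) i ∈ R → (σ' ^ k) i = i),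
          ∏ a, x a ^ cnt σ'' (fun i => i ∈ s.erase e ∧ bl i = a ∧ i ∉ R) := by
        intro j hjJ
        rw [Finset.mem_filter] at hjJ
        obtain ⟨hjs, hja⟩ := hjJ
        rw [Finset.mul_sum]
        apply Finset.sum_congr rfl
        intro σ'' hσ''
        rw [Finset.mem_filter] at hσ''
        have hσ''e : σ'' e = e := hσ''.2.1 e (Finset.notMem_erase e s)
        by_cases hje : j = e
        · subst hje
          rw [if_pos rfl]
          have hτ : σ'' * Equiv.swap e e = σ'' := by
            rw [Equiv.swap_self]
            rfl
          rw [hτ]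
          have hc : ∀ a, cnt σ'' (fun i => i ∈ s ∧ bl i = a ∧ i ∉ R) =
              cnt σ'' (fun i => i ∈ s.erase e ∧ bl i = a ∧ i ∉ R) +
                (if a = a₀ then 1 else 0) := fun a =>
            cnt_fix bl R σ'' s e hσ''e hes heR a a₀ hea
          simp only [hc, pow_add]
          rw [Finset.prod_mul_distrib]
          have hpr : (∏ a, x a ^ (if a = a₀ then 1 else 0)) = x a₀ := by
            have h3 : ∀ a : Fin p, x a ^ (if a = a₀ then 1 else 0) =
                (if a = a₀ then x a else 1) := by
              intro a; split <;> simp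
            simp only [h3]
            rw [Finset.prod_ite_eq' Finset.univ a₀ x]
            simp
          rw [hpr, mul_comm]
        · rw [if_neg hje]
          have hc : ∀ a, cnt (σ'' * Equiv.swap e j)
              (fun i => i ∈ s ∧ bl i = a ∧ i ∉ R) =
              cnt σ'' (fun i => i ∈ s.erase e ∧ bl i = a ∧ i ∉ R) := fun a =>
            cnt_ins bl R σ'' s e j a₀ hσ''e hes heR hea hjs hja hje hmax a
          simp only [hc, one_mul]
      rw [Finset.sum_congr rfl hinner, ← Finset.sum_mul]
      have hsum : (∑ j ∈ s.filter (fun i => bl i = a₀),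
          (if j = e then x a₀ else (1:ℤ))) =
          x a₀ + (((s.filter (fun i => bl i = a₀)).card : ℤ) - 1) := by
        have h4 : ∀ j ∈ s.filter (fun i => bl i = a₀),
            (if j = e then x a₀ else (1:ℤ)) =
            1 + (if j = e then x a₀ - 1 else 0) := by
          intro j _; split <;> ring
        rw [Finset.sum_congr rfl h4, Finset.sum_add_distrib, Finset.sum_const,
          Finset.sum_ite_eq' (s.filter (fun i => bl i = a₀)) e
            (fun _ => x a₀ - 1), if_pos hJe]
        push_cast
        ring
      rw [hsum, IH]
      -- final product manipulation
      have hm' : ∀ a : Fin p, ((s.erase e).filter (fun i => bl i = a)).card =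
          if a = a₀ then (s.filter (fun i => bl i = a₀)).card - 1
          else (s.filter (fun i => bl i = a)).card := by
        intro a
        rw [Finset.filter_erase]
        by_cases ha : a = a₀
        · subst ha
          rw [if_pos rfl, Finset.card_erase_of_mem hJe]
        · rw [if_neg ha, Finset.erase_eq_of_notMem]
          intro hmem
          rw [Finset.mem_filter] at hmem
          exact ha (by rw [← hmem.2, hea])
      have hm₀pos : 1 ≤ (s.filter (fun i => bl i = a₀)).card :=
        Finset.card_pos.2 ⟨e, hJe⟩
      have hr₀ : (R.filter (fun i => bl i = a₀)).card ≤
          (s.filter (fun i => bl i = a₀)).card - 1 := by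
        have hsub : R.filter (fun i => bl i = a₀) ⊆
            (s.filter (fun i => bl i = a₀)).erase e := by
          intro i hi
          rw [Finset.mem_filter] at hi
          exact Finset.mem_erase.2 ⟨fun h2 => heR (h2 ▸ hi.1),
            Finset.mem_filter.2 ⟨hRs hi.1, hi.2⟩⟩
        have := Finset.card_le_card hsub
        rwa [Finset.card_erase_of_mem hJe] at this
      rw [Finset.prod_eq_prod_diff_singleton_mul (Finset.mem_univ a₀)
        (fun a => ∏ j ∈ Finset.Ico ((R.filter fun i => bl i = a).card)
          (((s.erase e).filter fun i => bl i = a).card), (x a + (j : ℤ)))]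
      conv_rhs => rw [Finset.prod_eq_prod_diff_singleton_mul (Finset.mem_univ a₀)
        (fun a => ∏ j ∈ Finset.Ico ((R.filter fun i => bl i = a).card)
          ((s.filter fun i => bl i = a).card), (x a + (j : ℤ)))]
      have hoff : (∏ a ∈ Finset.univ \ {a₀},
          ∏ j ∈ Finset.Ico ((R.filter fun i => bl i = a).card)
            (((s.erase e).filter fun i => bl i = a).card), (x a + (j : ℤ))) =
          ∏ a ∈ Finset.univ \ {a₀},
          ∏ j ∈ Finset.Ico ((R.filter fun i => bl i = a).card)
            ((s.filter fun i => bl i = a).card), (x a + (j : ℤ)) := by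
        apply Finset.prod_congr rfl
        intro a ha
        rw [Finset.mem_sdiff, Finset.mem_singleton] at ha
        rw [hm' a, if_neg ha.2]
      have htop : (∏ j ∈ Finset.Ico ((R.filter fun i => bl i = a₀).card)
          ((s.filter fun i => bl i = a₀).card), (x a₀ + (j : ℤ))) =
          (∏ j ∈ Finset.Ico ((R.filter fun i => bl i = a₀).card)
            (((s.erase e).filter fun i => bl i = a₀).card), (x a₀ + (j : ℤ))) *
          (x a₀ + (((s.filter (fun i => bl i = a₀)).card : ℤ) - 1)) := by
        rw [hm' a₀, if_pos rfl]
        have hsucc : (s.filter (fun i => bl i = a₀)).card =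
            ((s.filter (fun i => bl i = a₀)).card - 1) + 1 := by omega
        conv_lhs => rw [hsucc]
        rw [Finset.prod_Ico_succ_top hr₀]
        congr 1
        have : ((((s.filter (fun i => bl i = a₀)).card - 1 : ℕ)) : ℤ) =
            ((s.filter (fun i => bl i = a₀)).card : ℤ) - 1 := by
          push_cast [hm₀pos]
          omega
        rw [this]
      rw [hoff, htop]
      ring
  
lemma prod_neg_desc : ∀ (d r N : ℕ), r + d = N →
    (∏ j ∈ Finset.Ico r N, ((-(N:ℤ)) + (j:ℤ))) = (-1)^d * (d.factorial : ℤ) := by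
  intro d
  induction d with
  | zero =>
    intro r N h
    rw [show N = r from by omega]
    simp
  | succ d ihd =>
    intro r N h
    have hrN : r < N := by omega
    rw [Finset.prod_eq_prod_Ico_succ_bot hrN, ihd (r + 1) N (by omega)]
    have hN : (N : ℤ) = (r : ℤ) + (d : ℤ) + 1 := by
      push_cast [← h]
      ring
    rw [hN, Nat.factorial_succ]
    push_cast
    ring

end Kin7
end Kin7aux

/-- For a subset `R` of `{1,…,n}` and a kinematic permutation `δ`
of `R` (encoded as a permutation of `{1,…,n}` fixing the complement of `R` and
changing block on `R`),
`Σ_{σ : R_σ = R, δ_σ = δ} ∏_a (−n_a)^{ℓ_a(σ)} = (−1)^{n+|R|} ∏_a (n_a − |R ∩ I_a|)!`,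
where `δ_σ(i) = σ^{t(σ,i)}(i)` on `R_σ`. The partition of `{1,…,n}` into
consecutive intervals `I₁,…,I_p` with `|I_a| = n_a` is encoded by the monotone
map `bl` with fiber cardinalities `nv a`. -/
theorem sum_over_perms_with_given_kinematic_part
    (p : ℕ) (hp : 1 ≤ p) (nv : Fin p → ℕ) (hnv : ∀ a, 1 ≤ nv a)
    (n : ℕ) (hn : n = ∑ a, nv a)
    (bl : Fin n → Fin p) (hbl : Monotone bl)
    (hcard : ∀ a, (Finset.univ.filter fun i => bl i = a).card = nv a)
    (R : Finset (Fin n)) (δ : Equiv.Perm (Fin n))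
    (hδkin : ∀ i ∈ R, bl (δ i) ≠ bl i) (hδfix : ∀ i ∉ R, δ i = i) :
    ∑ σ ∈ Finset.univ.filter (fun σ : Equiv.Perm (Fin n) =>
        Rsig bl σ = R ∧ ∀ i ∈ R, δ i = (σ ^ tmin bl σ i) i),
      ∏ a, (-(nv a : ℤ)) ^ cyclesInBlock bl σ a =
    (-1 : ℤ) ^ (n + R.card) *
      ∏ a, ((nv a - (R.filter fun i => bl i = a).card).factorial : ℤ) := by
    classical
  have step1 : (∑ σ ∈ Finset.univ.filter (fun σ : Equiv.Perm (Fin n) =>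
        Rsig bl σ = R ∧ ∀ i ∈ R, δ i = (σ ^ tmin bl σ i) i),
      ∏ a, (-(nv a : ℤ)) ^ cyclesInBlock bl σ a) =
      ∑ σ' ∈ Finset.univ.filter (fun σ' : Equiv.Perm (Fin n) =>
        (∀ i ∉ (Finset.univ : Finset (Fin n)), σ' i = i) ∧ (∀ i, bl (σ' i) = bl i) ∧
        ∀ i ∈ R, ∀ k : ℕ, (σ' ^ k) i ∈ R → (σ' ^ k) i = i),
      ∏ a, (-(nv a : ℤ)) ^ Kin7.cnt σ'
        (fun i => i ∈ (Finset.univ : Finset (Fin n)) ∧ bl i = a ∧ i ∉ R) := by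
    apply Finset.sum_nbij' (i := fun σ => δ⁻¹ * σ) (j := fun σ' => δ * σ')
    · intro σ hσ
      rw [Finset.mem_filter] at hσ ⊢
      obtain ⟨-, hRsig, ht⟩ := hσ
      have hbl' := Kin7.fwd_bl bl R δ hδkin hδfix σ hRsig ht
      exact ⟨Finset.mem_univ _, fun i hi => absurd (Finset.mem_univ i) hi, hbl',
        Kin7.fwd_c2 bl R δ hδkin hδfix σ hRsig ht hbl'⟩
    · intro σ' hσ'
      rw [Finset.mem_filter] at hσ' ⊢
      obtain ⟨-, -, hbl', hc2⟩ := hσ'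
      exact ⟨Finset.mem_univ _, Kin7.bwd bl R δ hδkin hδfix σ' hbl' hc2⟩
    · intro σ _
      exact mul_inv_cancel_left δ σ
    · intro σ' _
      exact inv_mul_cancel_left δ σ'
    · intro σ hσ
      rw [Finset.mem_filter] at hσ
      obtain ⟨-, hRsig, ht⟩ := hσ
      have hbl' := Kin7.fwd_bl bl R δ hδkin hδfix σ hRsig ht
      apply Finset.prod_congr rfl
      intro a _
      congr 1
      have h1 : cyclesInBlock bl σ a = Kin7.cnt σ (fun i => bl i = a) :=
        Kin7.cyclesInBlock_eq_cnt bl σ a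
      have h2 : Kin7.cnt (δ * (δ⁻¹ * σ)) (fun i => bl i = a)
          = Kin7.cnt (δ⁻¹ * σ) (fun i => bl i = a ∧ i ∉ R) :=
        Kin7.cnt_transfer bl R δ hδkin hδfix (δ⁻¹ * σ) hbl' a
      rw [mul_inv_cancel_left] at h2
      rw [h1, h2]
      exact Kin7.cnt_congr _ (fun i => by simp)
  have step2 : (∑ σ' ∈ Finset.univ.filter (fun σ' : Equiv.Perm (Fin n) =>
        (∀ i ∉ (Finset.univ : Finset (Fin n)), σ' i = i) ∧ (∀ i, bl (σ' i) = bl i) ∧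
        ∀ i ∈ R, ∀ k : ℕ, (σ' ^ k) i ∈ R → (σ' ^ k) i = i),
      ∏ a, (-(nv a : ℤ)) ^ Kin7.cnt σ'
        (fun i => i ∈ (Finset.univ : Finset (Fin n)) ∧ bl i = a ∧ i ∉ R)) =
      ∏ a, ∏ j ∈ Finset.Ico ((R.filter fun i => bl i = a).card)
        (((Finset.univ : Finset (Fin n)).filter fun i => bl i = a).card),
        ((-(nv a : ℤ)) + (j : ℤ)) :=
    Kin7.main_induction bl R (fun a => -(nv a : ℤ)) Finset.univ (Finset.subset_univ R)
  rw [step1, step2]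
  have hra : ∀ a, (R.filter fun i => bl i = a).card ≤ nv a := fun a => by
    rw [← hcard a]
    exact Finset.card_le_card (Finset.filter_subset_filter _ (Finset.subset_univ R))
  have hterm : ∀ a : Fin p, (∏ j ∈ Finset.Ico ((R.filter fun i => bl i = a).card)
      (((Finset.univ : Finset (Fin n)).filter fun i => bl i = a).card),
      ((-(nv a : ℤ)) + (j : ℤ)))
      = (-1 : ℤ) ^ (nv a - (R.filter fun i => bl i = a).card) *
        ((nv a - (R.filter fun i => bl i = a).card).factorial : ℤ) := by
    intro a
    rw [hcard a]
    exact Kin7.prod_neg_desc (nv a - (R.filter fun i => bl i = a).card) _ (nv a)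
      (by have := hra a; omega)
  rw [Finset.prod_congr rfl (fun a _ => hterm a), Finset.prod_mul_distrib,
    Finset.prod_pow_eq_pow_sum]
  have hRsum : R.card = ∑ a, (R.filter fun i => bl i = a).card :=
    Finset.card_eq_sum_card_fiberwise (fun i _ => Finset.mem_univ (bl i))
  have hsum : (∑ a, (nv a - (R.filter fun i => bl i = a).card)) = n - R.card := by
    rw [Finset.sum_tsub_distrib _ (fun a _ => hra a), ← hn, ← hRsum]
  have hcn : R.card ≤ n := by
    have := Finset.card_le_univ R
    simpa using this
  rw [hsum]
  have hpow : (-1 : ℤ) ^ (n - R.card) = (-1 : ℤ) ^ (n + R.card) := by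
    have h2 : n + R.card = (n - R.card) + 2 * R.card := by omega
    rw [h2, pow_add, pow_mul]
    norm_num
  rw [hpow]
end

section
/- Suppose every vertex v ∈ V has exactly one outgoing edge e_v, and suppose G has a unique simple directed cycle, namely c = the rotation class of (e_{v_1},…,e_{v_k}) where v_1,…,v_k are distinct vertices with t(e_{v_i}) = v_{i+1} (indices mod k). Then for any edge weights and any representation (U_e)_{e∈E}, det Δ = ( ∏_{v ∈ V} x_{e_v}^{n_v} ) · det( I_{n_{v_1}} − U_{e_{v_1}} U_{e_{v_2}} ⋯ U_{e_{v_k}} ). -/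
open Matrix
open Fin.NatCast

/-- The index set `⊔_v {v} × {1,…,n_v}` of the canonical basis of `⊕_v ℂ^{n_v}`. -/
abbrev QIdx (p : ℕ) (nv : Fin p → ℕ) := Σ v : Fin p, Fin (nv v)

/-- The diagonal projection onto the block of the vertex `u`. -/
def qProj (p : ℕ) (nv : Fin p → ℕ) (u : Fin p) : Matrix (QIdx p nv) (QIdx p nv) ℂ :=
  Matrix.of fun q r => if q = r ∧ q.1 = u then 1 else 0

/-- The matrix `U e`, padded by zeros to an endomorphism of `⊕_v ℂ^{n_v}`
(supported on rows in the block of `s e` and columns in the block of `t e`). -/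
def qPadU (p m : ℕ) (s t : Fin m → Fin p) (nv : Fin p → ℕ)
    (U : ∀ e : Fin m, Matrix (Fin (nv (s e))) (Fin (nv (t e))) ℂ) (e : Fin m) :
    Matrix (QIdx p nv) (QIdx p nv) ℂ :=
  Matrix.of fun q r =>
    if hq : q.1 = s e then
      if hr : r.1 = t e then
        U e (Fin.cast (congrArg nv hq) q.2) (Fin.cast (congrArg nv hr) r.2)
      else 0
    else 0

/-- The matrix of the twisted Laplacian `Δ` in the canonical basis:
`(Δf)(v) = Σ_{e : s e = v} x_e (f (s e) − U_e f (t e))`, i.e.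
`Δ = Σ_e x_e (P_{s e} − Ũ_e)`. Its blocks are `Δ_{[uu]} = z_u I` and
`Δ_{[uv]} = −Σ_{e : u→v} x_e U_e` for `u ≠ v`. -/
noncomputable def qLap (p m : ℕ) (s t : Fin m → Fin p) (x : Fin m → ℂ) (nv : Fin p → ℕ)
    (U : ∀ e : Fin m, Matrix (Fin (nv (s e))) (Fin (nv (t e))) ℂ) :
    Matrix (QIdx p nv) (QIdx p nv) ℂ :=
  ∑ e, x e • (qProj p nv (s e) - qPadU p m s t nv U e)

/-- `z_u = Σ_{e : s e = u} x_e`. -/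
noncomputable def qz (p m : ℕ) (s : Fin m → Fin p) (x : Fin m → ℂ) (u : Fin p) : ℂ :=
  ∑ e ∈ Finset.univ.filter (fun e => s e = u), x e

/-- A cycle on the quiver: a nonempty list of edges `[e₁,…,e_k]` with
`t eᵢ = s eᵢ₊₁` (cyclically), chosen to be the (lexicographically) least
representative of its rotation class, so that cycles (rotation classes) are
in bijection with such lists. -/
def IsQCycle (p m : ℕ) (s t : Fin m → Fin p) (l : List (Fin m)) : Prop :=
  l ≠ [] ∧ l.Chain' (fun e f => t e = s f) ∧ l.getLast?.map t = l.head?.map s ∧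
    ∀ k, l ≤ l.rotate k

/-- The type of cycles on the quiver. -/
abbrev QCycle (p m : ℕ) (s t : Fin m → Fin p) := {l : List (Fin m) // IsQCycle p m s t l}

/-- The holonomy `hol(c) = U_{e₁} ⋯ U_{e_k}` of a cycle, computed with the
zero-padded edge matrices: this `n × n` matrix is zero outside the block of the
base vertex `s e₁`, where it equals the genuine holonomy; in particular its
trace, and `det(I − u • hol)`, agree with those of the genuine holonomy. -/
noncomputable def qHol (p m : ℕ) (s t : Fin m → Fin p) (nv : Fin p → ℕ)
    (U : ∀ e : Fin m, Matrix (Fin (nv (s e))) (Fin (nv (t e))) ℂ)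
    (l : List (Fin m)) : Matrix (QIdx p nv) (QIdx p nv) ℂ :=
  (l.map (qPadU p m s t nv U)).prod

/-- `x^{e(c)} = x_{e₁} ⋯ x_{e_k}`. -/
def qxprod {m : ℕ} (x : Fin m → ℂ) (l : List (Fin m)) : ℂ := (l.map x).prod

/-- `v_a(c)`: the number of visits of the cycle at the vertex `a`
(the number of `i` with `s eᵢ = a`). -/
def qvisits (p m : ℕ) (s : Fin m → Fin p) (l : List (Fin m)) (a : Fin p) : ℕ :=
  (l.map s).count a

/-- `val(c)`: the cardinality of the stabilizer of `(e₁,…,e_k)` under the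
rotation action of `ℤ/kℤ`. -/
def qval {m : ℕ} (l : List (Fin m)) : ℕ :=
  ((Finset.range l.length).filter fun k => l.rotate k = l).card

/-- Total number of visits at `a` of a multiset of cycles, with multiplicity. -/
def qmsVisits (p m : ℕ) (s t : Fin m → Fin p) (C : Multiset (QCycle p m s t)) (a : Fin p) : ℕ :=
  (C.map fun c => qvisits p m s c.val a).sum

/-- `C!`: the product of the factorials of the multiplicities of the elements of `C`. -/
def qmsFact (p m : ℕ) (s t : Fin m → Fin p) (C : Multiset (QCycle p m s t)) : ℕ :=
  C.toFinset.prod fun c => (C.count c).factorial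

section Helpers

variable (p m : ℕ) (s t : Fin m → Fin p) (nv : Fin p → ℕ)
  (U : ∀ e : Fin m, Matrix (Fin (nv (s e))) (Fin (nv (t e))) ℂ)

lemma qProj_mul (a : Fin p) (M : Matrix (QIdx p nv) (QIdx p nv) ℂ) :
    qProj p nv a * M = Matrix.of fun q r => if q.1 = a then M q r else 0 := by
  ext q r
  rw [Matrix.mul_apply, Matrix.of_apply]
  by_cases h : q.1 = a
  · simp [qProj, h, Finset.sum_ite_eq, ite_mul]
  · simp [qProj, h]


lemma mul_qProj (a : Fin p) (M : Matrix (QIdx p nv) (QIdx p nv) ℂ) :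
    M * qProj p nv a = Matrix.of fun q r => if r.1 = a then M q r else 0 := by
  ext q r
  rw [Matrix.mul_apply, Matrix.of_apply]
  by_cases h : r.1 = a
  · have : ∀ z : QIdx p nv, (z = r ∧ z.1 = a) ↔ z = r := by
      intro z; constructor
      · exact fun hz => hz.1
      · rintro rfl; exact ⟨rfl, h⟩
    simp [qProj, this, Finset.sum_ite_eq', mul_ite, h]
  · have : ∀ z : QIdx p nv, ¬(z = r ∧ z.1 = a) := by
      rintro z ⟨rfl, hz⟩; exact h hz
    simp [qProj, this, h]

lemma qProj_sum : ∑ a, qProj p nv a = 1 := by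
  ext q r
  rw [Matrix.sum_apply]
  by_cases h : q = r
  · subst h; simp [qProj, Matrix.one_apply]
  · simp [qProj, Matrix.one_apply, h]

lemma qPadU_row_ne (e : Fin m) (q r : QIdx p nv) (h : q.1 ≠ s e) :
    qPadU p m s t nv U e q r = 0 := by
  simp [qPadU, h]

lemma qPadU_col_ne (e : Fin m) (q r : QIdx p nv) (h : r.1 ≠ t e) :
    qPadU p m s t nv U e q r = 0 := by
  simp [qPadU, h]

lemma qProj_mul_qProj (a b : Fin p) :
    qProj p nv a * qProj p nv b = if a = b then qProj p nv a else 0 := by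
  rw [qProj_mul]
  ext q r
  simp only [Matrix.of_apply, qProj]
  by_cases hab : a = b <;> by_cases h : q.1 = a <;> by_cases hqr : q = r <;>
    simp_all

lemma qProj_mul_qPadU (a : Fin p) (e : Fin m) :
    qProj p nv a * qPadU p m s t nv U e = if a = s e then qPadU p m s t nv U e else 0 := by
  rw [qProj_mul]
  by_cases hab : a = s e
  · rw [if_pos hab]
    ext q r
    by_cases h : q.1 = a
    · simp [h]
    · rw [Matrix.of_apply, if_neg h,
        qPadU_row_ne p m s t nv U e q r (fun hh => h (hh.trans hab.symm))]
  · rw [if_neg hab]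
    ext q r
    by_cases h : q.1 = a
    · rw [Matrix.of_apply, if_pos h,
        qPadU_row_ne p m s t nv U e q r (fun hh => hab (h.symm.trans hh)), Matrix.zero_apply]
    · simp [h]

lemma qPadU_mul_qProj (e : Fin m) (a : Fin p) :
    qPadU p m s t nv U e * qProj p nv a = if a = t e then qPadU p m s t nv U e else 0 := by
  rw [mul_qProj]
  by_cases hab : a = t e
  · rw [if_pos hab]
    ext q r
    by_cases h : r.1 = a
    · simp [h]
    · rw [Matrix.of_apply, if_neg h,
        qPadU_col_ne p m s t nv U e q r (fun hh => h (hh.trans hab.symm))]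
  · rw [if_neg hab]
    ext q r
    by_cases h : r.1 = a
    · rw [Matrix.of_apply, if_pos h,
        qPadU_col_ne p m s t nv U e q r (fun hh => hab (h.symm.trans hh)), Matrix.zero_apply]
    · simp [h]

end Helpers

section AuxDet
open Polynomial
section
variable {n : Type*} [Fintype n] [DecidableEq n]

lemma aux_eval_one_charpoly (C : Matrix n n ℂ) : (C.charpoly).eval 1 = (1 - C).det := by
  rw [Matrix.charpoly, _root_.eval_det, matPolyEquiv_charmatrix]
  simp

lemma aux_det_one_sub_nilpotent (C : Matrix n n ℂ) (r : ℕ) (hC : C ^ r = 0) :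
    (1 - C).det = 1 := by
  have hchar : C.charpoly = X ^ Fintype.card n := by
    rw [← sub_eq_zero]
    exact (Matrix.isNilpotent_charpoly_sub_pow_of_isNilpotent ⟨r, hC⟩).eq_zero
  rw [← aux_eval_one_charpoly, hchar]
  simp

lemma aux_det_factor (B C : Matrix n n ℂ) (r : ℕ) (hC : C ^ r = 0) :
    (1 - (C + B)).det = (1 - (∑ j ∈ Finset.range r, C ^ j) * B).det := by
  set W := ∑ j ∈ Finset.range r, C ^ j with hWdef
  have hW : (1 - C) * W = 1 := by
    have h : (C - 1) * W = C ^ r - 1 := mul_geom_sum C r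
    have : (1 - C) * W = -(C ^ r - 1) := by
      rw [← h]; rw [← neg_sub C 1, neg_mul]
    rw [this, hC]; simp
  have key : (1 - C) * (1 - W * B) = 1 - (C + B) := by
    rw [Matrix.mul_sub, Matrix.mul_one, ← Matrix.mul_assoc, hW, Matrix.one_mul, sub_sub]
  calc (1 - (C + B)).det = ((1 - C) * (1 - W * B)).det := by rw [key]
    _ = (1 - C).det * (1 - W * B).det := Matrix.det_mul _ _
    _ = (1 - W * B).det := by rw [aux_det_one_sub_nilpotent C r hC, one_mul]
end


end AuxDet

/-- Suppose every vertex has exactly one outgoing edge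
(`e = out (s e)`, `s (out v) = v`) and that `G` has a unique simple directed
cycle, given by the distinct vertices `v 0, …, v (k-1)` with
`t (out (v i)) = v (i+1)` (cyclically); uniqueness is expressed by saying that
every periodic vertex of the map `w ↦ t (out w)` lies on this cycle.  Then for
any weights and any representation,
`det Δ = (∏_v x_{e_v}^{n_v}) · det(I − U_{e_{v 0}} U_{e_{v 1}} ⋯ U_{e_{v (k-1)}})`. -/
theorem det_qLap_unicyclic
    (p m : ℕ) (hp : 1 ≤ p) (s t : Fin m → Fin p) (hst : ∀ e, s e ≠ t e)
    (x : Fin m → ℂ) (nv : Fin p → ℕ) (hnv : ∀ w, 1 ≤ nv w)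
    (U : ∀ e : Fin m, Matrix (Fin (nv (s e))) (Fin (nv (t e))) ℂ)
    (out : Fin p → Fin m) (hout_s : ∀ w, s (out w) = w) (hout : ∀ e, e = out (s e))
    (k : ℕ) (v : Fin (k + 1) → Fin p) (hvinj : Function.Injective v)
    (hcyc : ∀ i : Fin (k + 1), t (out (v i)) = v (i + 1))
    (huniq : ∀ w : Fin p, ∀ j : ℕ, 0 < j →
      (fun w => t (out w))^[j] w = w → ∃ i, v i = w) :
    (qLap p m s t x nv U).det =
      (∏ w, x (out w) ^ nv w) *
        Matrix.det (1 - qHol p m s t nv U (List.ofFn fun i : Fin (k + 1) => out (v i))) := by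
  classical
  set σ : Fin p → Fin p := fun w => t (out w) with hσdef
  set A : Fin p → Matrix (QIdx p nv) (QIdx p nv) ℂ :=
    fun w => qPadU p m s t nv U (out w) with hAdef
  set P : Fin p → Matrix (QIdx p nv) (QIdx p nv) ℂ := fun a => qProj p nv a with hPdef
  have hA' : ∀ w, qPadU p m s t nv U (out w) = A w := fun w => by rw [hAdef]
  have hP' : ∀ a, qProj p nv a = P a := fun a => by rw [hPdef]
  -- basic product relations
  have hPA : ∀ a w, P a * A w = if a = w then A w else 0 := by
    intro a w
    have h := qProj_mul_qPadU p m s t nv U a (out w)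
    rw [hout_s w, hA', hP'] at h
    exact h
  have hAP : ∀ w a, A w * P a = if a = σ w then A w else 0 := by
    intro w a
    have h := qPadU_mul_qProj p m s t nv U (out w) a
    rw [hA', hP'] at h
    exact h
  have hPP : ∀ a b, P a * P b = if a = b then P a else 0 := by
    intro a b
    have h := qProj_mul_qProj p nv a b
    rw [hP', hP'] at h
    exact h
  have hPsum : (∑ a, P a) = (1 : Matrix (QIdx p nv) (QIdx p nv) ℂ) := by
    have h := qProj_sum p nv
    simpa only [hP'] using h
  set N : Matrix (QIdx p nv) (QIdx p nv) ℂ := ∑ w, A w with hNdef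
  set Q : Matrix (QIdx p nv) (QIdx p nv) ℂ := ∑ i : Fin (k+1), P (v i) with hQdef
  set R : Matrix (QIdx p nv) (QIdx p nv) ℂ := 1 - Q with hRdef
  have hPN : ∀ a, P a * N = A a := by
    intro a
    rw [hNdef, Finset.mul_sum]
    simp only [hPA]
    simp
  have hAQ : ∀ w (i : Fin (k+1)), v i = σ w → A w * Q = A w := by
    intro w i hi
    rw [hQdef, Finset.mul_sum]
    have hiff : ∀ i' : Fin (k+1), (v i' = σ w) ↔ i' = i := fun i' =>
      ⟨fun h => hvinj (h.trans hi.symm), fun h => h ▸ hi⟩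
    simp only [hAP, hiff]
    simp
  have hAQ0 : ∀ w, (∀ i, v i ≠ σ w) → A w * Q = 0 := by
    intro w h
    rw [hQdef, Finset.mul_sum]
    simp only [hAP]
    exact Finset.sum_eq_zero fun i _ => if_neg (h i)
  have hσcyc : ∀ i : Fin (k+1), v (i+1) = σ (v i) := fun i => (hcyc i).symm
  -- nilpotency of N * R
  have claim1 : ∀ j, ∀ w : Fin p,
      (∃ i, 1 ≤ i ∧ i ≤ j ∧ ∃ i', v i' = σ^[i] w) → P w * (N * R) ^ j = 0 := by
    intro j
    induction j with
    | zero => rintro w ⟨i, h1, h2, -⟩; omega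
    | succ j ih =>
      rintro w ⟨i, h1, h2, i', hvi'⟩
      rw [pow_succ', ← mul_assoc, ← mul_assoc, hPN w]
      by_cases hc : ∃ i₀, v i₀ = σ w
      · obtain ⟨i₀, hi₀⟩ := hc
        have hz : A w * R = 0 := by
          rw [hRdef, mul_sub, mul_one, hAQ w i₀ hi₀, sub_self]
        rw [mul_assoc, ← mul_assoc (A w), hz, zero_mul]
      · push_neg at hc
        have hAR : A w * R = A w := by
          rw [hRdef, mul_sub, mul_one, hAQ0 w (fun i0 => hc i0), sub_zero]
        rw [hAR]
        have hAσ : A w = A w * P (σ w) := by rw [hAP]; simp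
        rw [hAσ, mul_assoc]
        have hi2 : 2 ≤ i := by
          by_contra hcon
          have hi1 : i = 1 := by omega
          subst hi1
          exact hc i' (by simpa using hvi')
        have hz : P (σ w) * (N * R) ^ j = 0 := by
          apply ih (σ w)
          refine ⟨i - 1, by omega, by omega, i', ?_⟩
          have h3 : σ^[(i-1)+1] w = σ^[i-1] (σ w) := Function.iterate_succ_apply σ (i-1) w
          rw [show (i-1)+1 = i by omega] at h3
          rw [← h3]
          exact hvi'
        rw [hz, mul_zero]
  have hreach : ∀ w, ∃ i, 1 ≤ i ∧ i ≤ p ∧ ∃ i', v i' = σ^[i] w := by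
    intro w
    have key : ∀ a b : Fin (p+1), a.val < b.val → σ^[a.val+1] w = σ^[b.val+1] w →
        ∃ i, 1 ≤ i ∧ i ≤ p ∧ ∃ i', v i' = σ^[i] w := by
      intro a b hlt heq
      have hper : σ^[b.val - a.val] (σ^[a.val+1] w) = σ^[a.val+1] w := by
        rw [← Function.iterate_add_apply, show b.val - a.val + (a.val+1) = b.val+1 by omega]
        exact heq.symm
      obtain ⟨i', hi'⟩ := huniq (σ^[a.val+1] w) (b.val - a.val) (by omega) hper
      exact ⟨a.val+1, by omega, by have := b.isLt; omega, i', hi'⟩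
    obtain ⟨a, b, hab, hfab⟩ :=
      Fintype.exists_ne_map_eq_of_card_lt (fun i : Fin (p+1) => σ^[i.val + 1] w) (by simp)
    rcases Nat.lt_or_ge a.val b.val with h | h
    · exact key a b h hfab
    · have h' : b.val < a.val := by
        have hne : a.val ≠ b.val := fun hh => hab (Fin.ext hh)
        omega
      exact key b a h' hfab.symm
  have hNRnil : (N * R) ^ p = 0 := by
    calc (N * R) ^ p = (∑ a, P a) * (N * R) ^ p := by rw [hPsum, one_mul]
      _ = ∑ a, P a * (N * R) ^ p := Finset.sum_mul _ _ _
      _ = 0 := Finset.sum_eq_zero fun w _ => claim1 p w (hreach w)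
  have hQN : Q * N = ∑ i : Fin (k+1), A (v i) := by
    rw [hQdef, Finset.sum_mul]
    exact Finset.sum_congr rfl fun i _ => hPN (v i)
  have hQNR : Q * (N * R) = 0 := by
    rw [← mul_assoc, hQN, Finset.sum_mul]
    apply Finset.sum_eq_zero
    intro i _
    rw [hRdef, mul_sub, mul_one, hAQ (v i) (i+1) (hσcyc i), sub_self]
  have hQW : Q * (∑ j ∈ Finset.range p, (N * R) ^ j) = Q := by
    rw [Finset.mul_sum, Finset.sum_eq_single 0]
    · simp
    · intro j _ hj0
      obtain ⟨j', rfl⟩ := Nat.exists_eq_succ_of_ne_zero hj0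
      rw [pow_succ', ← mul_assoc, hQNR, zero_mul]
    · intro h; exact absurd (Finset.mem_range.mpr (by omega)) h
  have d2 : (1 - N).det = (1 - Q * N).det := by
    have hsplit : N = (N * R) + N * Q := by
      rw [← mul_add, hRdef, sub_add_cancel, mul_one]
    calc (1 - N).det = (1 - ((N * R) + N * Q)).det := by rw [← hsplit]
      _ = (1 - (∑ j ∈ Finset.range p, (N * R) ^ j) * (N * Q)).det :=
          aux_det_factor _ _ p hNRnil
      _ = (1 - ((∑ j ∈ Finset.range p, (N * R) ^ j) * N) * Q).det := by rw [mul_assoc]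
      _ = (1 - Q * ((∑ j ∈ Finset.range p, (N * R) ^ j) * N)).det :=
          Matrix.det_one_sub_mul_comm _ _
      _ = (1 - Q * N).det := by rw [← mul_assoc, hQW]
  -- the cycle block
  set C2 : Matrix (QIdx p nv) (QIdx p nv) ℂ :=
    ∑ i ∈ Finset.univ.erase (0 : Fin (k+1)), A (v i) with hC2def
  have hQN2 : Q * N = C2 + A (v 0) := by
    rw [hQN, hC2def, ← Finset.sum_erase_add Finset.univ _ (Finset.mem_univ (0 : Fin (k+1)))]
  have hPC2a : ∀ i : Fin (k+1), i ≠ 0 → P (v i) * C2 = A (v i) := by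
    intro i hi
    rw [hC2def, Finset.mul_sum, Finset.sum_eq_single i]
    · rw [hPA]; simp
    · intro i' _ hne
      rw [hPA, if_neg (fun h => hne ((hvinj h).symm))]
    · intro habs
      exact absurd (Finset.mem_erase.mpr ⟨hi, Finset.mem_univ i⟩) habs
  have hPC2b : ∀ a, (∀ i : Fin (k+1), i ≠ 0 → v i ≠ a) → P a * C2 = 0 := by
    intro a ha
    rw [hC2def, Finset.mul_sum]
    apply Finset.sum_eq_zero
    intro i hi
    rw [hPA, if_neg (fun h => ha i (Finset.mem_erase.mp hi).1 h.symm)]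
  have hv0 : ∀ i' : Fin (k+1), i' ≠ 0 → v i' ≠ v 0 := fun i' hi' h => hi' (hvinj h)
  have claim2 : ∀ j, ∀ i : Fin (k+1),
      (i = 0 ∨ k + 1 < i.val + (j+1)) → P (v i) * C2 ^ (j+1) = 0 := by
    intro j
    induction j with
    | zero =>
      intro i hi
      rcases hi with rfl | hgt
      · rw [pow_one]; exact hPC2b (v 0) hv0
      · exact absurd hgt (by have := i.isLt; omega)
    | succ j ih =>
      intro i hi
      rw [pow_succ', ← mul_assoc]
      rcases eq_or_ne i 0 with rfl | hne
      · rw [hPC2b (v 0) hv0, zero_mul]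
      · rw [hPC2a i hne]
        have hcast : A (v i) = A (v i) * P (v (i+1)) := by
          rw [hAP, if_pos (hσcyc i)]
        rw [hcast, mul_assoc]
        rcases eq_or_ne i (Fin.last k) with rfl | hlast
        · have h0 : Fin.last k + 1 = 0 := by
            apply Fin.ext
            simp [Fin.add_def]
          rw [h0, ih 0 (Or.inl rfl), mul_zero]
        · have hvlt : i.val < k := by
            have h1 := i.isLt
            have h2 : i.val ≠ k := fun h => hlast (Fin.ext (by simpa using h))
            omega
          have hval : (i+1).val = i.val + 1 :=
            Fin.val_add_one_of_lt (by rw [Fin.lt_def]; simpa using hvlt)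
          have hz : P (v (i+1)) * C2 ^ (j+1) = 0 := by
            apply ih (i+1)
            right
            rw [hval]
            rcases hi with h0 | hgt
            · exact absurd h0 hne
            · omega
          rw [hz, mul_zero]
  have hC2nil : C2 ^ (k+1) = 0 := by
    calc C2 ^ (k+1) = (∑ a, P a) * C2 ^ (k+1) := by rw [hPsum, one_mul]
      _ = ∑ a, P a * C2 ^ (k+1) := Finset.sum_mul _ _ _
      _ = 0 := by
          apply Finset.sum_eq_zero
          intro a _
          by_cases h : ∃ i : Fin (k+1), v i = a
          · obtain ⟨i, rfl⟩ := h
            apply claim2 k i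
            rcases eq_or_ne i 0 with rfl | hne
            · exact Or.inl rfl
            · right
              have h1 : 1 ≤ i.val := by
                rcases Nat.eq_zero_or_pos i.val with h0 | h0
                · exact absurd (Fin.ext h0) hne
                · exact h0
              omega
          · push_neg at h
            rw [pow_succ', ← mul_assoc, hPC2b a (fun i _ => h i), zero_mul]
  -- the chain along the cycle
  set G : ℕ → Matrix (QIdx p nv) (QIdx p nv) ℂ :=
    fun j => ((List.range (j+1)).map fun l => A (v ((l : ℕ) : Fin (k+1)))).prod with hGdef
  have hG0 : G 0 = A (v ((0 : ℕ) : Fin (k+1))) := by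
    rw [hGdef]
    simp [List.range_succ]
  have hGsucc : ∀ j, G (j+1) = G j * A (v (((j+1 : ℕ)) : Fin (k+1))) := by
    intro j
    rw [hGdef]
    simp [List.range_succ, mul_assoc]
  have hGlast : ∀ j, ∃ X, G j = X * A (v ((j : ℕ) : Fin (k+1))) := by
    intro j
    cases j with
    | zero => exact ⟨1, by rw [hG0, one_mul]⟩
    | succ j => exact ⟨G j, hGsucc j⟩
  have hGP : ∀ j, G j * P (v (((j+1 : ℕ)) : Fin (k+1))) = G j := by
    intro j
    obtain ⟨X, hX⟩ := hGlast j
    have hc : (((j+1 : ℕ)) : Fin (k+1)) = ((j : ℕ) : Fin (k+1)) + 1 := by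
      push_cast
      ring
    rw [hX, mul_assoc, hAP, if_pos (by rw [hc]; exact hσcyc _)]
  have hchain : ∀ j, j ≤ k → A (v 0) * C2 ^ j = G j := by
    intro j
    induction j with
    | zero =>
      intro _
      rw [pow_zero, mul_one, hG0]
      norm_num
    | succ j ih =>
      intro hjk
      rw [pow_succ, ← mul_assoc, ih (by omega), ← hGP j, mul_assoc,
        hPC2a (((j+1 : ℕ)) : Fin (k+1)) ?_, hGsucc j]
      have hvalc : (((j+1 : ℕ)) : Fin (k+1)).val = j+1 := Fin.val_cast_of_lt (by omega)
      intro h0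
      rw [h0] at hvalc
      simp at hvalc
  have hcol0 : ∀ j, j < k → G j * P (v 0) = 0 := by
    intro j hj
    rw [← hGP j, mul_assoc, hPP, if_neg, mul_zero]
    intro h
    have h2 := hvinj h
    have hvalc : (((j+1 : ℕ)) : Fin (k+1)).val = j+1 := Fin.val_cast_of_lt (by omega)
    rw [h2] at hvalc
    simp at hvalc
  have hcolk : G k * P (v 0) = G k := by
    have h := hGP k
    rw [show (((k+1 : ℕ)) : Fin (k+1)) = 0 from Fin.natCast_self (k+1)] at h
    exact h
  have hHolG : qHol p m s t nv U (List.ofFn fun i : Fin (k+1) => out (v i)) = G k := by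
    rw [qHol, List.map_ofFn, hGdef]
    congr 1
    apply List.ext_getElem
    · simp
    · intro i h1 h2
      simp only [List.getElem_ofFn, List.getElem_map, List.getElem_range, Function.comp_apply]
      rw [hA']
      have hc : ((i : ℕ) : Fin (k+1)) = ⟨i, by simpa using h2⟩ :=
        Fin.ext (Fin.val_cast_of_lt (by simpa using h2))
      rw [hc]
  set W2 : Matrix (QIdx p nv) (QIdx p nv) ℂ := ∑ j ∈ Finset.range (k+1), C2 ^ j with hW2def
  have hABW : (A (v 0) * W2) * P (v 0) = G k := by
    rw [hW2def, Finset.mul_sum, Finset.sum_mul, Finset.sum_eq_single k]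
    · rw [hchain k le_rfl, hcolk]
    · intro j hj hjk
      rw [hchain j (by have := Finset.mem_range.mp hj; omega),
        hcol0 j (by have := Finset.mem_range.mp hj; omega), ]
    · intro h; exact absurd (Finset.mem_range.mpr (by omega)) h
  have d3 : (1 - Q * N).det =
      (1 - qHol p m s t nv U (List.ofFn fun i : Fin (k+1) => out (v i))).det := by
    have hXP : A (v 0) * W2 = P (v 0) * (A (v 0) * W2) := by
      conv_lhs => rw [show A (v 0) = P (v 0) * A (v 0) from by rw [hPA]; simp]
      rw [mul_assoc]
    calc (1 - Q * N).det = (1 - (C2 + A (v 0))).det := by rw [hQN2]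
      _ = (1 - W2 * A (v 0)).det := aux_det_factor _ _ (k+1) hC2nil
      _ = (1 - A (v 0) * W2).det := Matrix.det_one_sub_mul_comm _ _
      _ = (1 - P (v 0) * (A (v 0) * W2)).det := by rw [← hXP]
      _ = (1 - (A (v 0) * W2) * P (v 0)).det := Matrix.det_one_sub_mul_comm _ _
      _ = (1 - G k).det := by rw [hABW]
      _ = _ := by rw [hHolG]
  -- factoring out the diagonal
  have hbij : Function.Bijective out := by
    constructor
    · intro a b hab
      rw [← hout_s a, ← hout_s b, hab]
    · intro e; exact ⟨s e, (hout e).symm⟩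
  set D : Matrix (QIdx p nv) (QIdx p nv) ℂ :=
    Matrix.diagonal (fun q : QIdx p nv => x (out q.1)) with hDdef
  have hrow : ∀ w (q r : QIdx p nv), q.1 ≠ w → (P w - A w) q r = 0 := by
    intro w q r h
    rw [Matrix.sub_apply, ← hA',
      qPadU_row_ne p m s t nv U (out w) q r (by rw [hout_s]; exact h), sub_zero, ← hP']
    rw [show qProj p nv w q r = if q = r ∧ q.1 = w then 1 else 0 from rfl, if_neg]
    rintro ⟨rfl, hh⟩
    exact h hh
  have hLap : qLap p m s t x nv U = D * (1 - N) := by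
    have h1N : (1 : Matrix (QIdx p nv) (QIdx p nv) ℂ) - N = ∑ w, (P w - A w) := by
      rw [Finset.sum_sub_distrib, hPsum, hNdef]
    rw [qLap, h1N, Finset.mul_sum]
    rw [← hbij.sum_comp (fun e => x e • (qProj p nv (s e) - qPadU p m s t nv U e))]
    apply Finset.sum_congr rfl
    intro w _
    have hDW : D * (P w - A w) = x (out w) • (P w - A w) := by
      ext q r
      rw [hDdef, Matrix.diagonal_mul, Matrix.smul_apply, smul_eq_mul]
      by_cases h : q.1 = w
      · rw [h]
      · rw [hrow w q r h, mul_zero, mul_zero]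
    rw [hDW, hout_s w, hA', hP']
  have hdetD : D.det = ∏ w, x (out w) ^ nv w := by
    rw [hDdef, Matrix.det_diagonal, ← Finset.univ_sigma_univ, Finset.prod_sigma]
    apply Finset.prod_congr rfl
    intro w _
    simp [Finset.prod_const, Finset.card_univ]
  rw [hLap, Matrix.det_mul, hdetD, d2, d3]
end
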